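/- arXiv:2308.03787 — 6 statements merged into one kernel-verified Lean document; each statement's English description precedes it below -/
import Mathlib

section
/- Let V = (v₁,…,vₙ) be a convex n-gon in ℝ² (indices mod n) with vertices in general position, and let uᵢ be the intersection of the diagonals (v_{i−1}v_{i+1}) and (v_i v_{i+2}), so uᵢ = Aᵢvᵢ + Bᵢv_{i+2} = Cᵢv_{i−1} + Dᵢv_{i+1} with Aᵢ, Bᵢ, Cᵢ, Dᵢ as defined. Then [uᵢ−u_{i+1}, u_{i+1}−u_{i+2}] / [u_{i−1}−u_{i+1}, u_{i+1}−u_{i+2}] = Cᵢ / A_{i−1}. That is, the pentagram map transforms the ratio Cᵢ/Aᵢ into Cᵢ/A_{i−1}. -/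
noncomputable section

/-- The 2×2 determinant [u,v] = u₁v₂ − u₂v₁. -/
def det2 (u v : ℝ × ℝ) : ℝ := u.1 * v.2 - u.2 * v.1

/-- A_i = [v_{i-1}-v_{i+1}, v_{i+1}-v_{i+2}] / [v_{i-1}-v_{i+1}, v_i-v_{i+2}]. -/
def Acoef (v : ℤ → ℝ × ℝ) (i : ℤ) : ℝ :=
  det2 (v (i-1) - v (i+1)) (v (i+1) - v (i+2)) / det2 (v (i-1) - v (i+1)) (v i - v (i+2))

/-- B_i = [v_{i-1}-v_i, v_i-v_{i+1}] / [v_{i-1}-v_{i+1}, v_i-v_{i+2}]. -/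
def Bcoef (v : ℤ → ℝ × ℝ) (i : ℤ) : ℝ :=
  det2 (v (i-1) - v i) (v i - v (i+1)) / det2 (v (i-1) - v (i+1)) (v i - v (i+2))

/-- C_i = [v_i-v_{i+1}, v_{i+1}-v_{i+2}] / [v_{i-1}-v_{i+1}, v_i-v_{i+2}]. -/
def Ccoef (v : ℤ → ℝ × ℝ) (i : ℤ) : ℝ :=
  det2 (v i - v (i+1)) (v (i+1) - v (i+2)) / det2 (v (i-1) - v (i+1)) (v i - v (i+2))

/-- D_i = [v_{i-1}-v_i, v_i-v_{i+2}] / [v_{i-1}-v_{i+1}, v_i-v_{i+2}]. -/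
def Dcoef (v : ℤ → ℝ × ℝ) (i : ℤ) : ℝ :=
  det2 (v (i-1) - v i) (v i - v (i+2)) / det2 (v (i-1) - v (i+1)) (v i - v (i+2))

/-- The pentagram map: u_i = A_i v_i + B_i v_{i+2}, the intersection of the
diagonals (v_{i-1} v_{i+1}) and (v_i v_{i+2}). -/
def pent (v : ℤ → ℝ × ℝ) (i : ℤ) : ℝ × ℝ :=
  Acoef v i • v i + Bcoef v i • v (i+2)

lemma sumAB (v : ℤ → ℝ × ℝ) (j : ℤ)
    (h : det2 (v (j-1) - v (j+1)) (v j - v (j+2)) ≠ 0) :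
    Bcoef v j = 1 - Acoef v j := by
  unfold Acoef Bcoef
  rw [eq_sub_iff_add_eq, ← add_div, div_eq_one_iff_eq h]
  simp only [det2, Prod.fst_sub, Prod.snd_sub]
  ring

lemma sumCD (v : ℤ → ℝ × ℝ) (j : ℤ)
    (h : det2 (v (j-1) - v (j+1)) (v j - v (j+2)) ≠ 0) :
    Dcoef v j = 1 - Ccoef v j := by
  unfold Ccoef Dcoef
  rw [eq_sub_iff_add_eq, ← add_div, div_eq_one_iff_eq h]
  simp only [det2, Prod.fst_sub, Prod.snd_sub]
  ring

lemma det2_comb (a b c : ℝ) (x y : ℝ × ℝ) :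
    det2 (a • x + b • y) (c • y) = a * c * det2 x y := by
  simp only [det2, Prod.fst_add, Prod.snd_add, Prod.smul_fst, Prod.smul_snd, smul_eq_mul]
  ring

theorem stmt4 (v : ℤ → ℝ × ℝ) (i : ℤ)
    (hden : ∀ j, det2 (v (j-1) - v (j+1)) (v j - v (j+2)) ≠ 0)
    (hu : ∀ j, pent v j = Ccoef v j • v (j-1) + Dcoef v j • v (j+1))
    (hA : Acoef v (i-1) ≠ 0)
    (hdenU : det2 (pent v (i-1) - pent v (i+1)) (pent v (i+1) - pent v (i+2)) ≠ 0) :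
    det2 (pent v i - pent v (i+1)) (pent v (i+1) - pent v (i+2)) /
      det2 (pent v (i-1) - pent v (i+1)) (pent v (i+1) - pent v (i+2))
    = Ccoef v i / Acoef v (i-1) := by
  have e1 : i + 2 - 1 = i + 1 := by ring
  have e2 : i + 2 + 1 = i + 3 := by ring
  have e3 : i + 1 + 2 = i + 3 := by ring
  have e4 : i - 1 + 2 = i + 1 := by ring
  have hB1 : Bcoef v (i+1) = 1 - Acoef v (i+1) := sumAB v _ (hden _)
  have hB0 : Bcoef v (i-1) = 1 - Acoef v (i-1) := sumAB v _ (hden _)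
  have hD2 : Dcoef v (i+2) = 1 - Ccoef v (i+2) := sumCD v _ (hden _)
  have hDi : Dcoef v i = 1 - Ccoef v i := sumCD v _ (hden _)
  have h1 : pent v (i+1) - pent v (i+2)
      = (Acoef v (i+1) - Ccoef v (i+2)) • (v (i+1) - v (i+3)) := by
    rw [hu (i+2)]
    unfold pent
    rw [e1, e2, e3, hB1, hD2]
    module
  have h2 : pent v i - pent v (i+1)
      = Ccoef v i • (v (i-1) - v (i+1)) + Bcoef v (i+1) • (v (i+1) - v (i+3)) := by
    rw [hu i]
    unfold pent
    rw [e3, hB1, hDi]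
    module
  have h3 : pent v (i-1) - pent v (i+1)
      = Acoef v (i-1) • (v (i-1) - v (i+1)) + Bcoef v (i+1) • (v (i+1) - v (i+3)) := by
    unfold pent
    rw [e3, e4, hB1, hB0]
    module
  rw [h1, h3, det2_comb] at hdenU ⊢
  rw [h2, det2_comb]
  set k := Acoef v (i+1) - Ccoef v (i+2)
  set X := det2 (v (i-1) - v (i+1)) (v (i+1) - v (i+3))
  have hkX : k * X ≠ 0 := by
    intro h
    apply hdenU
    rw [mul_assoc, h, mul_zero]
  rw [mul_assoc, mul_assoc, mul_div_mul_right _ _ hkX]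
end
end

section
/- With the setup of the pentagram map on a convex n-gon and the quantities Aᵢ, Bᵢ, Cᵢ, Dᵢ, the transformed quantity T(Bᵢ/Dᵢ), defined as the ratio [u_{i−1}−uᵢ, uᵢ−u_{i+1}]/[u_{i−1}−uᵢ, uᵢ−u_{i+2}] built from the image polygon U = T(V), equals B_{i+1}/D_{i+2}. -/
noncomputable section

theorem stmt5 (v : ℤ → ℝ × ℝ) (i : ℤ)
    (hden : ∀ j, det2 (v (j-1) - v (j+1)) (v j - v (j+2)) ≠ 0)
    (hu : ∀ j, pent v j = Ccoef v j • v (j-1) + Dcoef v j • v (j+1))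
    (hD : Dcoef v (i+2) ≠ 0)
    (hdenU : det2 (pent v (i-1) - pent v i) (pent v i - pent v (i+2)) ≠ 0) :
    det2 (pent v (i-1) - pent v i) (pent v i - pent v (i+1)) /
      det2 (pent v (i-1) - pent v i) (pent v i - pent v (i+2))
    = Bcoef v (i+1) / Dcoef v (i+2) := by

  -- abbreviations
  have hAB : ∀ j : ℤ, Bcoef v j = 1 - Acoef v j := by
    intro j
    have h := hden j
    unfold Acoef Bcoef
    field_simp
    simp only [det2, Prod.fst_sub, Prod.snd_sub]
    ring
  have hCD : ∀ j : ℤ, Dcoef v j = 1 - Ccoef v j := by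
    intro j
    have h := hden j
    unfold Ccoef Dcoef
    field_simp
    simp only [det2, Prod.fst_sub, Prod.snd_sub]
    ring
  -- index normalizations
  have e1 : i - 1 + 2 = i + 1 := by ring
  have e2 : i + 1 - 1 = i := by ring
  have e3 : i + 1 + 1 = i + 2 := by ring
  have e4 : i + 2 - 1 = i + 1 := by ring
  have e5 : i + 2 + 1 = i + 3 := by ring
  have e6 : i + 1 + 2 = i + 3 := by ring
  -- the three difference vectors
  have hw1 : pent v (i-1) - pent v i
      = (Acoef v (i-1) - Ccoef v i) • (v (i-1) - v (i+1)) := by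
    rw [hu i]
    show Acoef v (i-1) • v (i-1) + Bcoef v (i-1) • v (i-1+2) - _ = _
    rw [e1, hAB (i-1), hCD i]
    apply Prod.ext <;>
      simp [Prod.smul_fst, Prod.smul_snd] <;> ring
  have hw2 : pent v i - pent v (i+1)
      = (Acoef v i - Ccoef v (i+1)) • (v i - v (i+2)) := by
    rw [hu (i+1), e2, e3]
    show Acoef v i • v i + Bcoef v i • v (i+2) - _ = _
    rw [hAB i, hCD (i+1)]
    apply Prod.ext <;>
      simp [Prod.smul_fst, Prod.smul_snd] <;> ring
  have hw3 : pent v i - pent v (i+2)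
      = Ccoef v i • v (i-1) + (Dcoef v i - Ccoef v (i+2)) • v (i+1)
        - Dcoef v (i+2) • v (i+3) := by
    rw [hu i, hu (i+2), e4, e5]
    apply Prod.ext <;>
      simp [Prod.smul_fst, Prod.smul_snd] <;> ring
  -- numerator and denominator of the transformed ratio
  have hN : det2 (pent v (i-1) - pent v i) (pent v i - pent v (i+1))
      = (Acoef v (i-1) - Ccoef v i) * ((Acoef v i - Ccoef v (i+1))
        * det2 (v (i-1) - v (i+1)) (v i - v (i+2))) := by
    rw [hw1, hw2]
    simp only [det2, Prod.smul_fst, Prod.smul_snd, Prod.fst_sub, Prod.snd_sub,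
      smul_eq_mul]
    ring
  have hM : det2 (pent v (i-1) - pent v i) (pent v i - pent v (i+2))
      = (Acoef v (i-1) - Ccoef v i) * (Dcoef v (i+2)
        * det2 (v (i-1) - v (i+1)) (v (i+1) - v (i+3))) := by
    rw [hw1, hw3, hCD i, hCD (i+2)]
    simp only [det2, Prod.smul_fst, Prod.smul_snd, Prod.fst_sub, Prod.snd_sub,
      Prod.fst_add, Prod.snd_add, smul_eq_mul]
    ring
  -- nonvanishing facts extracted from hdenU
  rw [hM] at hdenU ⊢
  rw [hN]
  have hlam : Acoef v (i-1) - Ccoef v i ≠ 0 := by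
    intro h; apply hdenU; rw [h]; ring
  have hK : det2 (v (i-1) - v (i+1)) (v (i+1) - v (i+3)) ≠ 0 := by
    intro h; apply hdenU; rw [h]; ring
  -- the key Pluecker-type identity: mu * d_i = B_{i+1} * K
  have key : (Acoef v i - Ccoef v (i+1)) * det2 (v (i-1) - v (i+1)) (v i - v (i+2))
      = Bcoef v (i+1) * det2 (v (i-1) - v (i+1)) (v (i+1) - v (i+3)) := by
    have h1 := hden i
    have h2 := hden (i+1)
    simp only [e2, e3, e6] at h2
    unfold Acoef Ccoef Bcoef
    simp only [e2, e3, e6]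
    field_simp
    simp only [det2, Prod.fst_sub, Prod.snd_sub]
    ring
  rw [div_eq_div_iff (by exact mul_ne_zero hlam (mul_ne_zero hD hK)) hD]
  linear_combination ((Acoef v (i-1) - Ccoef v i) * Dcoef v (i+2)) * key
end
end

section
/- (Schwartz's invariant) Let V = (v₁,…,vₙ) be a convex n-gon in general position with pentagram image U = T(V). Define f(V) = ∏_{i=1}^n (B_{i−1}·Cᵢ)/(A_{i−1}·Dᵢ), where Aᵢ, Bᵢ, Cᵢ, Dᵢ are the determinant ratios for V, and define f(T(V)) analogously using the polygon U. Then f(T(V)) = f(V); i.e., f is invariant under the pentagram map. -/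
noncomputable section

/-- Schwartz's invariant f(V) = ∏_{i=1}^n (B_{i-1} C_i)/(A_{i-1} D_i). -/
def pentInvariant (n : ℕ) (v : ℤ → ℝ × ℝ) : ℝ :=
  ∏ i ∈ Finset.range n, (Bcoef v ((i : ℤ) - 1) * Ccoef v (i : ℤ)) /
    (Acoef v ((i : ℤ) - 1) * Dcoef v (i : ℤ))

namespace PentAux

def dd (v : ℤ → ℝ × ℝ) (i : ℤ) : ℝ := det2 (v (i-1) - v (i+1)) (v i - v (i+2))
def EE (v : ℤ → ℝ × ℝ) (i : ℤ) : ℝ := det2 (v (i-1) - v i) (v i - v (i+1))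
def RR (v : ℤ → ℝ × ℝ) (i : ℤ) : ℝ := det2 (v (i-1) - v (i+1)) (v (i+1) - v (i+3))
def PP (v : ℤ → ℝ × ℝ) (i : ℤ) : ℝ := det2 (v (i-1) - v (i+1)) (v (i+1) - v (i+2))
def QQ (v : ℤ → ℝ × ℝ) (i : ℤ) : ℝ := det2 (v (i-1) - v i) (v i - v (i+2))
def lamS (v : ℤ → ℝ × ℝ) (i : ℤ) : ℝ := EE v (i+1) * RR v i / (dd v i * dd v (i+1))

lemma det2_smul_smul (a b : ℝ) (x y : ℝ × ℝ) : det2 (a • x) (b • y) = a * b * det2 x y := by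
  simp [det2]; ring

lemma det2_comb_left (a b c : ℝ) (x y z : ℝ × ℝ) :
    det2 (a • x + b • y) (c • z) = a * c * det2 x z + b * c * det2 y z := by
  simp [det2]; ring

lemma det2_comb_right (a b c : ℝ) (x y z : ℝ × ℝ) :
    det2 (a • x) (b • y + c • z) = a * b * det2 x y + a * c * det2 x z := by
  simp [det2]; ring

lemma det2_comb (a b c d : ℝ) (x y z w : ℝ × ℝ) :
    det2 (a • x + b • y) (c • z + d • w) =
      a * c * det2 x z + a * d * det2 x w + b * c * det2 y z + b * d * det2 y w := by
  simp [det2]; ring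

lemma det2_self (x : ℝ × ℝ) : det2 x x = 0 := by simp [det2, mul_comm]

lemma I2abs (a b c d e : ℝ × ℝ) :
    det2 (b-c) (c-d) * det2 (a-c) (c-e) + det2 (c-d) (d-e) * det2 (a-c) (b-d)
      = det2 (a-c) (c-d) * det2 (b-d) (c-e) := by
  simp only [det2, Prod.fst_sub, Prod.snd_sub]; ring

lemma I3abs (a b c d e : ℝ × ℝ) :
    det2 (a-b) (b-c) * det2 (b-d) (c-e) + det2 (b-c) (c-d) * det2 (a-c) (c-e)
      = det2 (b-c) (c-e) * det2 (a-c) (b-d) := by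
  simp only [det2, Prod.fst_sub, Prod.snd_sub]; ring

lemma step (v : ℤ → ℝ × ℝ) (hd : ∀ j, dd v j ≠ 0) (i : ℤ) :
    pent v i - pent v (i+1) = lamS v i • (v i - v (i+2)) := by
  have h0 := hd i
  have h1 := hd (i+1)
  simp only [dd, det2, Prod.fst_sub, Prod.snd_sub,
    show i+1-1 = i from by ring, show i+1+1 = i+2 from by ring,
    show i+1+2 = i+3 from by ring] at h0 h1
  refine Prod.ext ?_ ?_ <;>
  · simp only [pent, Acoef, Bcoef, lamS, EE, RR, dd, det2,
      show i+1-1 = i from by ring, show i+1+1 = i+2 from by ring,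
      show i+1+2 = i+3 from by ring,
      Prod.fst_sub, Prod.snd_sub, Prod.fst_add, Prod.snd_add,
      Prod.smul_fst, Prod.smul_snd, smul_eq_mul]
    field_simp
    ring


lemma keyA (v : ℤ → ℝ × ℝ) (hd : ∀ j, dd v j ≠ 0) (i : ℤ) :
    lamS v (i-1) * RR v i + lamS v i * dd v (i+1) = PP v (i-1) * RR v i / dd v (i-1) := by
  have hI : EE v i * RR v (i-1) + EE v (i+1) * dd v (i-1) = PP v (i-1) * dd v i := by
    have h := I2abs (v (i-2)) (v (i-1)) (v i) (v (i+1)) (v (i+2))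
    simp only [EE, RR, dd, PP,
      show i-1-1 = i-2 from by ring, show i-1+1 = i from by ring,
      show i-1+2 = i+1 from by ring, show i-1+3 = i+2 from by ring,
      show i+1-1 = i from by ring, show i+1+1 = i+2 from by ring]
    exact h
  have e1 : lamS v (i-1) = EE v i * RR v (i-1) / (dd v (i-1) * dd v i) := by
    simp only [lamS, show i-1+1 = i from by ring]
  have e2 : lamS v i = EE v (i+1) * RR v i / (dd v i * dd v (i+1)) := rfl
  rw [e1, e2]
  field_simp [hd (i-1), hd i, hd (i+1)]
  linear_combination (RR v i) * hI


lemma keyD (v : ℤ → ℝ × ℝ) (hd : ∀ j, dd v j ≠ 0) (i : ℤ) :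
    lamS v i * dd v i + lamS v (i+1) * RR v i = QQ v (i+2) * RR v i / dd v (i+2) := by
  have hI : EE v (i+1) * dd v (i+2) + EE v (i+2) * RR v (i+1) = QQ v (i+2) * dd v (i+1) := by
    have h := I3abs (v i) (v (i+1)) (v (i+2)) (v (i+3)) (v (i+4))
    simp only [EE, RR, dd, QQ,
      show i+1-1 = i from by ring, show i+1+1 = i+2 from by ring,
      show i+1+2 = i+3 from by ring, show i+1+3 = i+4 from by ring,
      show i+2-1 = i+1 from by ring, show i+2+1 = i+3 from by ring,
      show i+2+2 = i+4 from by ring]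
    exact h
  have e2 : lamS v (i+1) = EE v (i+2) * RR v (i+1) / (dd v (i+1) * dd v (i+2)) := by
    simp only [lamS, show i+1+1 = i+2 from by ring]
  rw [show lamS v i = EE v (i+1) * RR v i / (dd v i * dd v (i+1)) from rfl, e2]
  field_simp [hd i, hd (i+1), hd (i+2)]
  linear_combination (RR v i) * hI



lemma denU_eq (v : ℤ → ℝ × ℝ) (hd : ∀ j, dd v j ≠ 0) (j : ℤ) :
    det2 (pent v (j-1) - pent v (j+1)) (pent v j - pent v (j+2)) =
      lamS v (j-1) * lamS v j * dd v j + lamS v (j-1) * lamS v (j+1) * RR v j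
        + lamS v j * lamS v (j+1) * dd v (j+1) := by
  have s1 := step v hd (j-1)
  simp only [show j-1+1 = j from by ring, show j-1+2 = j+1 from by ring] at s1
  have s0 := step v hd j
  have sp := step v hd (j+1)
  simp only [show j+1+1 = j+2 from by ring, show j+1+2 = j+3 from by ring] at sp
  have c1 : pent v (j-1) - pent v (j+1)
      = lamS v (j-1) • (v (j-1) - v (j+1)) + lamS v j • (v j - v (j+2)) := by
    rw [← sub_add_sub_cancel (pent v (j-1)) (pent v j) (pent v (j+1)), s1, s0]
  have c3 : pent v j - pent v (j+2)
      = lamS v j • (v j - v (j+2)) + lamS v (j+1) • (v (j+1) - v (j+3)) := by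
    rw [← sub_add_sub_cancel (pent v j) (pent v (j+1)) (pent v (j+2)), s0, sp]
  rw [c1, c3, det2_comb, det2_self,
    show det2 (v (j-1) - v (j+1)) (v j - v (j+2)) = dd v j from rfl,
    show det2 (v (j-1) - v (j+1)) (v (j+1) - v (j+3)) = RR v j from rfl,
    show det2 (v j - v (j+2)) (v (j+1) - v (j+3)) = dd v (j+1) from by
      simp only [dd, show j+1-1 = j from by ring, show j+1+1 = j+2 from by ring,
        show j+1+2 = j+3 from by ring]]
  ring

set_option maxHeartbeats 2000000 in
lemma factorU (v : ℤ → ℝ × ℝ) (hd : ∀ j, dd v j ≠ 0)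
    (hdU : ∀ j, det2 (pent v (j-1) - pent v (j+1)) (pent v j - pent v (j+2)) ≠ 0)
    (hE : ∀ k, EE v k ≠ 0) (hR : ∀ k, RR v k ≠ 0)
    (hP : ∀ k, PP v k ≠ 0) (hQ : ∀ k, QQ v k ≠ 0) (j : ℤ) :
    (Bcoef (pent v) (j-1) * Ccoef (pent v) j) / (Acoef (pent v) (j-1) * Dcoef (pent v) j)
      = EE v (j-1) * EE v (j+2) * RR v (j-2) * RR v (j+1)
        / (PP v (j-2) * QQ v (j+2) * RR v (j-1) * RR v j) := by
  -- steps
  have s2 := step v hd (j-2)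
  simp only [show j-2+1 = j-1 from by ring, show j-2+2 = j from by ring] at s2
  have s1 := step v hd (j-1)
  simp only [show j-1+1 = j from by ring, show j-1+2 = j+1 from by ring] at s1
  have s0 := step v hd j
  have sp := step v hd (j+1)
  simp only [show j+1+1 = j+2 from by ring, show j+1+2 = j+3 from by ring] at sp
  -- combined differences
  have c1 : pent v (j-2) - pent v j
      = lamS v (j-2) • (v (j-2) - v j) + lamS v (j-1) • (v (j-1) - v (j+1)) := by
    rw [← sub_add_sub_cancel (pent v (j-2)) (pent v (j-1)) (pent v j), s2, s1]
  have c2 : pent v (j-1) - pent v (j+1)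
      = lamS v (j-1) • (v (j-1) - v (j+1)) + lamS v j • (v j - v (j+2)) := by
    rw [← sub_add_sub_cancel (pent v (j-1)) (pent v j) (pent v (j+1)), s1, s0]
  have c3 : pent v j - pent v (j+2)
      = lamS v j • (v j - v (j+2)) + lamS v (j+1) • (v (j+1) - v (j+3)) := by
    rw [← sub_add_sub_cancel (pent v j) (pent v (j+1)) (pent v (j+2)), s0, sp]
  -- det2 conversions
  have tA : det2 (v (j-2) - v j) (v (j-1) - v (j+1)) = dd v (j-1) := by
    simp only [dd, show j-1-1 = j-2 from by ring, show j-1+1 = j from by ring,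
      show j-1+2 = j+1 from by ring]
  have tB : det2 (v (j-2) - v j) (v j - v (j+2)) = RR v (j-1) := by
    simp only [RR, show j-1-1 = j-2 from by ring, show j-1+1 = j from by ring,
      show j-1+3 = j+2 from by ring]
  have tC : det2 (v j - v (j+2)) (v (j+1) - v (j+3)) = dd v (j+1) := by
    simp only [dd, show j+1-1 = j from by ring, show j+1+1 = j+2 from by ring,
      show j+1+2 = j+3 from by ring]
  -- the two pentagram denominators
  have hW1 := hdU (j-1)
  rw [denU_eq v hd (j-1)] at hW1
  simp only [show j-1-1 = j-2 from by ring, show j-1+1 = j from by ring] at hW1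
  have hW2 := hdU j
  rw [denU_eq v hd j] at hW2
  -- key identities
  have kA := keyA v hd (j-1)
  simp only [show j-1-1 = j-2 from by ring, show j-1+1 = j from by ring] at kA
  have kD := keyD v hd j
  -- the four coefficients of the image polygon
  have hBu : Bcoef (pent v) (j-1)
      = (lamS v (j-2) * lamS v (j-1) * dd v (j-1)) /
        (lamS v (j-2) * lamS v (j-1) * dd v (j-1) + lamS v (j-2) * lamS v j * RR v (j-1)
          + lamS v (j-1) * lamS v j * dd v j) := by
    simp only [Bcoef, show j-1-1 = j-2 from by ring, show j-1+1 = j from by ring,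
      show j-1+2 = j+1 from by ring]
    rw [s2, s1, c1, c2, det2_smul_smul, det2_comb, det2_self, tA, tB,
      show det2 (v (j-1) - v (j+1)) (v j - v (j+2)) = dd v j from rfl]
    ring
  have hCu : Ccoef (pent v) j
      = (lamS v j * lamS v (j+1) * dd v (j+1)) /
        (lamS v (j-1) * lamS v j * dd v j + lamS v (j-1) * lamS v (j+1) * RR v j
          + lamS v j * lamS v (j+1) * dd v (j+1)) := by
    simp only [Ccoef]
    rw [s0, sp, c2, c3, det2_smul_smul, det2_comb, det2_self, tC,
      show det2 (v (j-1) - v (j+1)) (v j - v (j+2)) = dd v j from rfl,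
      show det2 (v (j-1) - v (j+1)) (v (j+1) - v (j+3)) = RR v j from rfl]
    ring
  have hAu : Acoef (pent v) (j-1)
      = (lamS v j * (PP v (j-2) * RR v (j-1) / dd v (j-2))) /
        (lamS v (j-2) * lamS v (j-1) * dd v (j-1) + lamS v (j-2) * lamS v j * RR v (j-1)
          + lamS v (j-1) * lamS v j * dd v j) := by
    simp only [Acoef, show j-1-1 = j-2 from by ring, show j-1+1 = j from by ring,
      show j-1+2 = j+1 from by ring]
    rw [c1, c2, s0, det2_comb_left, det2_comb, det2_self, tA, tB,
      show det2 (v (j-1) - v (j+1)) (v j - v (j+2)) = dd v j from rfl,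
      ← kA]
    ring
  have hDu : Dcoef (pent v) j
      = (lamS v (j-1) * (QQ v (j+2) * RR v j / dd v (j+2))) /
        (lamS v (j-1) * lamS v j * dd v j + lamS v (j-1) * lamS v (j+1) * RR v j
          + lamS v j * lamS v (j+1) * dd v (j+1)) := by
    simp only [Dcoef]
    rw [s1, c2, c3, det2_comb_right, det2_comb, det2_self, tC,
      show det2 (v (j-1) - v (j+1)) (v j - v (j+2)) = dd v j from rfl,
      show det2 (v (j-1) - v (j+1)) (v (j+1) - v (j+3)) = RR v j from rfl,
      ← kD]
    ring
  -- nonzeroness of lambdas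
  have hlam : ∀ k, lamS v k ≠ 0 := fun k =>
    div_ne_zero (mul_ne_zero (hE (k+1)) (hR k)) (mul_ne_zero (hd k) (hd (k+1)))
  -- unfold the outer lambdas
  have el2 : lamS v (j-2) = EE v (j-1) * RR v (j-2) / (dd v (j-2) * dd v (j-1)) := by
    simp only [lamS, show j-2+1 = j-1 from by ring]
  have el1 : lamS v (j+1) = EE v (j+2) * RR v (j+1) / (dd v (j+1) * dd v (j+2)) := by
    simp only [lamS, show j+1+1 = j+2 from by ring]
  rw [hBu, hCu, hAu, hDu, div_mul_div_comm, div_mul_div_comm,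
    div_div_div_cancel_right₀ (mul_ne_zero hW1 hW2), el2, el1]
  have z1 : dd v (j-2) ≠ 0 := hd _
  have z2 : dd v (j-1) ≠ 0 := hd _
  have z3 : dd v (j+1) ≠ 0 := hd _
  have z4 : dd v (j+2) ≠ 0 := hd _
  have z5 : RR v (j-1) ≠ 0 := hR _
  have z6 : RR v j ≠ 0 := hR _
  have z7 : PP v (j-2) ≠ 0 := hP _
  have z8 : QQ v (j+2) ≠ 0 := hQ _
  have z9 : lamS v (j-1) ≠ 0 := hlam _
  have z10 : lamS v j ≠ 0 := hlam _
  set x1 := dd v (j-2); set x2 := dd v (j-1); set x3 := dd v (j+1); set x4 := dd v (j+2)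
  set x5 := RR v (j-1); set x6 := RR v j; set x7 := PP v (j-2); set x8 := QQ v (j+2)
  set x9 := lamS v (j-1); set x10 := lamS v j
  set y1 := EE v (j-1); set y2 := EE v (j+2); set y3 := RR v (j-2); set y4 := RR v (j+1)
  field_simp [z1, z2, z3, z4, z5, z6, z7, z8, z9, z10]


lemma factorV (v : ℤ → ℝ × ℝ) (hd : ∀ j, dd v j ≠ 0)
    (hP : ∀ k, PP v k ≠ 0) (hQ : ∀ k, QQ v k ≠ 0) (j : ℤ) :
    (Bcoef v (j-1) * Ccoef v j) / (Acoef v (j-1) * Dcoef v j)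
      = EE v (j-1) * EE v (j+1) / (PP v (j-1) * QQ v j) := by
  have b1 : Bcoef v (j-1) = EE v (j-1) / dd v (j-1) := rfl
  have a1 : Acoef v (j-1) = PP v (j-1) / dd v (j-1) := rfl
  have d1 : Dcoef v j = QQ v j / dd v j := rfl
  have c1 : Ccoef v j = EE v (j+1) / dd v j := by
    simp only [Ccoef, EE, dd, show j+1-1 = j from by ring, show j+1+1 = j+2 from by ring]
  rw [b1, a1, d1, c1, div_mul_div_comm, div_mul_div_comm,
    div_div_div_cancel_right₀ (mul_ne_zero (hd (j-1)) (hd j))]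

lemma rotate1 {n : ℕ} {g : ℤ → ℝ} (hg : ∀ i, g (i + n) = g i) :
    ∏ i ∈ Finset.range n, g ((i : ℤ) + 1) = ∏ i ∈ Finset.range n, g (i : ℤ) := by
  cases n with
  | zero => simp
  | succ m =>
    rw [Finset.prod_range_succ, Finset.prod_range_succ']
    have h1 : g ((m : ℤ) + 1) = g 0 := by
      rw [show ((m : ℤ) + 1) = 0 + ((m+1 : ℕ) : ℤ) from by push_cast; ring, hg 0]
    simp only [Nat.cast_add, Nat.cast_one, Nat.cast_zero, h1]

lemma prod_shift {n : ℕ} {g : ℤ → ℝ} (hg : ∀ i, g (i + n) = g i) (k : ℤ) :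
    ∏ i ∈ Finset.range n, g ((i : ℤ) + k) = ∏ i ∈ Finset.range n, g (i : ℤ) := by
  induction k using Int.induction_on with
  | zero => simp
  | succ k ih =>
    have hg' : ∀ i, (fun x => g (x + k)) (i + n) = (fun x => g (x + k)) i := fun i => by
      simp only
      rw [show i + (n : ℤ) + k = (i + k) + n from by ring, hg]
    have h := rotate1 (n := n) (g := fun x => g (x + (k : ℤ))) hg'
    calc ∏ i ∈ Finset.range n, g ((i : ℤ) + ((k : ℤ) + 1))
        = ∏ i ∈ Finset.range n, g (((i : ℤ) + 1) + k) :=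
          Finset.prod_congr rfl (fun x _ => by rw [show (x : ℤ) + ((k : ℤ)+1) = ((x : ℤ)+1)+k from by ring])
      _ = ∏ i ∈ Finset.range n, g ((i : ℤ) + k) := h
      _ = _ := ih
  | pred k ih =>
    have hg' : ∀ i, (fun x => g (x + (-(k : ℤ) - 1))) (i + n) = (fun x => g (x + (-(k : ℤ) - 1))) i := fun i => by
      simp only
      rw [show i + (n : ℤ) + (-(k : ℤ) - 1) = (i + (-(k : ℤ) - 1)) + n from by ring, hg]
    have h := rotate1 (n := n) (g := fun x => g (x + (-(k : ℤ) - 1))) hg'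
    calc ∏ i ∈ Finset.range n, g ((i : ℤ) + (-(k : ℤ) - 1))
        = ∏ i ∈ Finset.range n, g ((i : ℤ) + -(k : ℤ)) := by
          rw [← h]
          exact Finset.prod_congr rfl (fun x _ => by
            rw [show (x : ℤ) + 1 + (-(k : ℤ) - 1) = (x : ℤ) + -(k : ℤ) from by ring])
      _ = _ := ih

end PentAux

open PentAux

theorem stmt6 (n : ℕ) (hn : 5 ≤ n) (v : ℤ → ℝ × ℝ)
    (hper : ∀ i : ℤ, v (i + n) = v i)
    (hden : ∀ j, det2 (v (j-1) - v (j+1)) (v j - v (j+2)) ≠ 0)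
    (hdenU : ∀ j, det2 (pent v (j-1) - pent v (j+1)) (pent v j - pent v (j+2)) ≠ 0)
    (hA : ∀ j, Acoef v j ≠ 0) (hB : ∀ j, Bcoef v j ≠ 0)
    (hC : ∀ j, Ccoef v j ≠ 0) (hD : ∀ j, Dcoef v j ≠ 0) :
    pentInvariant n (pent v) = pentInvariant n v := by
  have hd : ∀ k, dd v k ≠ 0 := hden
  have hE : ∀ k, EE v k ≠ 0 := by
    intro k h
    exact hB k (by rw [show Bcoef v k = EE v k / dd v k from rfl, h, zero_div])
  have hPn : ∀ k, PP v k ≠ 0 := by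
    intro k h
    exact hA k (by rw [show Acoef v k = PP v k / dd v k from rfl, h, zero_div])
  have hQn : ∀ k, QQ v k ≠ 0 := by
    intro k h
    exact hD k (by rw [show Dcoef v k = QQ v k / dd v k from rfl, h, zero_div])
  have hR : ∀ k, RR v k ≠ 0 := by
    intro k h
    apply hdenU k
    rw [denU_eq v hd k]
    have hz : lamS v k = 0 := by
      rw [show lamS v k = EE v (k+1) * RR v k / (dd v k * dd v (k+1)) from rfl, h,
        mul_zero, zero_div]
    rw [hz, h]; ring
  -- periodicity of the basic quantities
  have hEp : ∀ i, EE v (i + n) = EE v i := by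
    intro i
    simp only [EE]
    rw [show i+(n:ℤ)-1 = (i-1)+(n:ℤ) from by ring, show i+(n:ℤ)+1 = (i+1)+(n:ℤ) from by ring,
      hper, hper, hper]
  have hRp : ∀ i, RR v (i + n) = RR v i := by
    intro i
    simp only [RR]
    rw [show i+(n:ℤ)-1 = (i-1)+(n:ℤ) from by ring, show i+(n:ℤ)+1 = (i+1)+(n:ℤ) from by ring,
      show i+(n:ℤ)+3 = (i+3)+(n:ℤ) from by ring, hper, hper, hper]
  have hPp : ∀ i, PP v (i + n) = PP v i := by
    intro i
    simp only [PP]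
    rw [show i+(n:ℤ)-1 = (i-1)+(n:ℤ) from by ring, show i+(n:ℤ)+1 = (i+1)+(n:ℤ) from by ring,
      show i+(n:ℤ)+2 = (i+2)+(n:ℤ) from by ring, hper, hper, hper]
  have hQp : ∀ i, QQ v (i + n) = QQ v i := by
    intro i
    simp only [QQ]
    rw [show i+(n:ℤ)-1 = (i-1)+(n:ℤ) from by ring, show i+(n:ℤ)+2 = (i+2)+(n:ℤ) from by ring,
      hper, hper, hper]
  -- rewrite both invariants using the per-index formulas
  unfold pentInvariant
  refine Eq.trans (Finset.prod_congr (rfl : Finset.range n = Finset.range n)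
      (fun (i : ℕ) _ => factorU v hd hdenU hE hR hPn hQn (i : ℤ)))
    (Eq.trans ?_ (Finset.prod_congr (rfl : Finset.range n = Finset.range n)
      (fun (i : ℕ) _ => factorV v hd hPn hQn (i : ℤ))).symm)
  simp only [Finset.prod_div_distrib, Finset.prod_mul_distrib]
  -- shift all products to the unshifted ones
  have sE1 : ∏ i ∈ Finset.range n, EE v ((i:ℤ) - 1) = ∏ i ∈ Finset.range n, EE v (i:ℤ) :=
    (Finset.prod_congr rfl (fun x _ => by rw [sub_eq_add_neg])).trans (prod_shift hEp (-1))
  have sE2 : ∏ i ∈ Finset.range n, EE v ((i:ℤ) + 2) = ∏ i ∈ Finset.range n, EE v (i:ℤ) :=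
    prod_shift hEp 2
  have sE3 : ∏ i ∈ Finset.range n, EE v ((i:ℤ) + 1) = ∏ i ∈ Finset.range n, EE v (i:ℤ) :=
    prod_shift hEp 1
  have sR1 : ∏ i ∈ Finset.range n, RR v ((i:ℤ) - 2) = ∏ i ∈ Finset.range n, RR v (i:ℤ) :=
    (Finset.prod_congr rfl (fun x _ => by rw [sub_eq_add_neg])).trans (prod_shift hRp (-2))
  have sR2 : ∏ i ∈ Finset.range n, RR v ((i:ℤ) + 1) = ∏ i ∈ Finset.range n, RR v (i:ℤ) :=
    prod_shift hRp 1
  have sR3 : ∏ i ∈ Finset.range n, RR v ((i:ℤ) - 1) = ∏ i ∈ Finset.range n, RR v (i:ℤ) :=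
    (Finset.prod_congr rfl (fun x _ => by rw [sub_eq_add_neg])).trans (prod_shift hRp (-1))
  have sP1 : ∏ i ∈ Finset.range n, PP v ((i:ℤ) - 2) = ∏ i ∈ Finset.range n, PP v (i:ℤ) :=
    (Finset.prod_congr rfl (fun x _ => by rw [sub_eq_add_neg])).trans (prod_shift hPp (-2))
  have sP2 : ∏ i ∈ Finset.range n, PP v ((i:ℤ) - 1) = ∏ i ∈ Finset.range n, PP v (i:ℤ) :=
    (Finset.prod_congr rfl (fun x _ => by rw [sub_eq_add_neg])).trans (prod_shift hPp (-1))
  have sQ1 : ∏ i ∈ Finset.range n, QQ v ((i:ℤ) + 2) = ∏ i ∈ Finset.range n, QQ v (i:ℤ) :=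
    prod_shift hQp 2
  rw [sE1, sE2, sE3, sR1, sR2, sR3, sP1, sP2, sQ1]
  -- cancel the common factors
  have hRprod : ∏ i ∈ Finset.range n, RR v (i:ℤ) ≠ 0 :=
    Finset.prod_ne_zero_iff.mpr (fun i _ => hR i)
  have hPprod : ∏ i ∈ Finset.range n, PP v (i:ℤ) ≠ 0 :=
    Finset.prod_ne_zero_iff.mpr (fun i _ => hPn i)
  have hQprod : ∏ i ∈ Finset.range n, QQ v (i:ℤ) ≠ 0 :=
    Finset.prod_ne_zero_iff.mpr (fun i _ => hQn i)
  field_simp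
end
end

section
/- Let γ: ℝ → ℝ² be smooth with [γ'(x), γ''(x)] ≠ 0, set W(x) = [γ'(x), γ'''(x)]/[γ'(x), γ''(x)], and for n ∈ ℕ define points vⱼ = γ(x + (j−i)/n) for j near i. Let B_{i+k} = [v_{i+k−1}−v_{i+k}, v_{i+k}−v_{i+k+1}]/[v_{i+k−1}−v_{i+k+1}, v_{i+k}−v_{i+k+2}] for bounded k. Then B_{i+k} = 1/4 − W(x)/(8n) + O(1/n²) as n → ∞. -/
open Filter Asymptotics Topology

noncomputable section

/-- W = [γ', γ'''] / [γ', γ'']. -/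
def Wc (γ : ℝ → ℝ × ℝ) (t : ℝ) : ℝ :=
  det2 (deriv γ t) (iteratedDeriv 3 γ t) / det2 (deriv γ t) (iteratedDeriv 2 γ t)

/-- MVT step for Peano-form Taylor remainders. -/
lemma littleO_step {u : ℝ → ℝ} {m : ℕ} (hu : Differentiable ℝ u) (h0 : u 0 = 0)
    (h : deriv u =o[𝓝 (0:ℝ)] fun t => t ^ m) :
    u =o[𝓝 (0:ℝ)] fun t => t ^ (m + 1) := by
  rw [isLittleO_iff] at h ⊢
  intro ε hε
  obtain ⟨δ, hδ, hb⟩ := Metric.eventually_nhds_iff.mp (h hε)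
  refine Metric.eventually_nhds_iff.mpr ⟨δ, hδ, fun y hy => ?_⟩
  have hyabs : |y| < δ := by simpa [Real.dist_eq] using hy
  have key : ∀ t ∈ Set.uIcc (0:ℝ) y, ‖deriv u t‖ ≤ ε * |y| ^ m := by
    intro t ht
    have h1 : |t| ≤ |y| := by
      rw [Set.uIcc_eq_union] at ht
      rcases ht with ht | ht <;> rw [Set.mem_Icc] at ht <;> rw [abs_le] <;>
        constructor <;> nlinarith [abs_nonneg y, le_abs_self y, neg_abs_le y]
    have h2 : dist t 0 < δ := by
      rw [Real.dist_eq, sub_zero]; exact lt_of_le_of_lt h1 hyabs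
    calc ‖deriv u t‖ ≤ ε * ‖t ^ m‖ := hb h2
      _ ≤ ε * |y| ^ m := by
        rw [Real.norm_eq_abs, abs_pow]
        exact mul_le_mul_of_nonneg_left (pow_le_pow_left₀ (abs_nonneg t) h1 m) hε.le
  have hmvt := Convex.norm_image_sub_le_of_norm_deriv_le
    (fun t _ => (hu t) : ∀ t ∈ Set.uIcc (0:ℝ) y, DifferentiableAt ℝ u t)
    key (convex_uIcc 0 y) Set.left_mem_uIcc Set.right_mem_uIcc
  rw [h0, sub_zero, sub_zero] at hmvt
  calc ‖u y‖ ≤ ε * |y| ^ m * ‖y‖ := hmvt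
    _ = ε * ‖y ^ (m+1)‖ := by rw [Real.norm_eq_abs, Real.norm_eq_abs, abs_pow]; ring

/-- Peano-form Taylor expansion to order 4 of a `C⁴` real function. -/
lemma taylor4 {g : ℝ → ℝ} (hg : ContDiff ℝ 4 g) (x : ℝ) :
    (fun t => g (x + t) - (g x + iteratedDeriv 1 g x * t + iteratedDeriv 2 g x * t ^ 2 / 2
      + iteratedDeriv 3 g x * t ^ 3 / 6 + iteratedDeriv 4 g x * t ^ 4 / 24))
      =o[𝓝 (0:ℝ)] fun t => t ^ 4 := by
  have hdm : ∀ m : ℕ, m < 4 → Differentiable ℝ (iteratedDeriv m g) := fun m hm =>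
    hg.differentiable_iteratedDeriv m (by exact_mod_cast hm)
  -- shifted iterated derivatives
  have hshift : ∀ m : ℕ, m < 4 → ∀ t : ℝ,
      HasDerivAt (fun t => iteratedDeriv m g (x + t)) (iteratedDeriv (m+1) g (x + t)) t := by
    intro m hm t
    have h1 : HasDerivAt (iteratedDeriv m g) (iteratedDeriv (m+1) g (x + t)) (x + t) := by
      rw [iteratedDeriv_succ]
      exact (hdm m hm (x + t)).hasDerivAt
    have h2 : HasDerivAt (fun t : ℝ => x + t) 1 t := (hasDerivAt_id t).const_add x
    have h3 := h1.comp t h2; rw [mul_one] at h3; exact h3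

  have h4c : Continuous (iteratedDeriv 4 g) :=
    hg.continuous_iteratedDeriv 4 (by exact_mod_cast le_rfl)
  set a0 := g x with ha0
  set a1 := iteratedDeriv 1 g x with ha1
  set a2 := iteratedDeriv 2 g x with ha2
  set a3 := iteratedDeriv 3 g x with ha3
  set a4 := iteratedDeriv 4 g x with ha4
  -- base case: continuity of the 4th derivative
  have base : (fun t : ℝ => iteratedDeriv 4 g (x + t) - a4) =o[𝓝 (0:ℝ)] fun t => t ^ 0 := by
    have hc : Continuous fun t : ℝ => iteratedDeriv 4 g (x + t) - a4 :=
      (h4c.comp (continuous_const.add continuous_id)).sub continuous_const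
    have : Tendsto (fun t : ℝ => iteratedDeriv 4 g (x + t) - a4) (𝓝 0) (𝓝 0) :=
      hc.tendsto' 0 0 (by simp [ha4])
    simpa [pow_zero] using (isLittleO_one_iff ℝ).mpr this
  -- level 3
  have hu3d : ∀ t : ℝ, HasDerivAt (fun t => iteratedDeriv 3 g (x + t) - (a3 + a4 * t))
      (iteratedDeriv 4 g (x + t) - a4 * 1) t := fun t =>
    (hshift 3 (by norm_num) t).sub (((hasDerivAt_id t).const_mul a4).const_add a3)
  have o3 : (fun t : ℝ => iteratedDeriv 3 g (x + t) - (a3 + a4 * t))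
      =o[𝓝 (0:ℝ)] fun t => t ^ 1 := by
    refine littleO_step (fun t => (hu3d t).differentiableAt) (by simp [ha3]) ?_
    have e3 : deriv (fun t : ℝ => iteratedDeriv 3 g (x + t) - (a3 + a4 * t))
        = fun t => iteratedDeriv 4 g (x + t) - a4 := by
      funext t; rw [(hu3d t).deriv]; ring
    rw [e3]; exact base
  -- level 2
  have hu2d : ∀ t : ℝ, HasDerivAt
      (fun t => iteratedDeriv 2 g (x + t) - (a2 + a3 * t + a4 * t ^ 2 / 2))
      (iteratedDeriv 3 g (x + t) - (a3 * 1 + a4 * (2 * t ^ 1) / 2)) t := fun t =>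
    (hshift 2 (by norm_num) t).sub
      ((((hasDerivAt_id t).const_mul a3).const_add a2).add
        (((hasDerivAt_pow 2 t).const_mul a4).div_const 2))
  have o2 : (fun t : ℝ => iteratedDeriv 2 g (x + t) - (a2 + a3 * t + a4 * t ^ 2 / 2))
      =o[𝓝 (0:ℝ)] fun t => t ^ 2 := by
    refine littleO_step (fun t => (hu2d t).differentiableAt) (by simp [ha2]) ?_
    have e2 : deriv (fun t : ℝ => iteratedDeriv 2 g (x + t) - (a2 + a3 * t + a4 * t ^ 2 / 2))
        = fun t => iteratedDeriv 3 g (x + t) - (a3 + a4 * t) := by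
      funext t; rw [(hu2d t).deriv]; ring
    rw [e2]; exact o3
  -- level 1
  have hu1d : ∀ t : ℝ, HasDerivAt
      (fun t => iteratedDeriv 1 g (x + t) - (a1 + a2 * t + a3 * t ^ 2 / 2 + a4 * t ^ 3 / 6))
      (iteratedDeriv 2 g (x + t) - (a2 * 1 + a3 * (2 * t ^ 1) / 2 + a4 * (3 * t ^ 2) / 6)) t :=
    fun t =>
    (hshift 1 (by norm_num) t).sub
      (((((hasDerivAt_id t).const_mul a2).const_add a1).add
        (((hasDerivAt_pow 2 t).const_mul a3).div_const 2)).add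
        (((hasDerivAt_pow 3 t).const_mul a4).div_const 6))
  have o1 : (fun t : ℝ => iteratedDeriv 1 g (x + t)
      - (a1 + a2 * t + a3 * t ^ 2 / 2 + a4 * t ^ 3 / 6)) =o[𝓝 (0:ℝ)] fun t => t ^ 3 := by
    refine littleO_step (fun t => (hu1d t).differentiableAt) (by simp [ha1]) ?_
    have e1 : deriv (fun t : ℝ => iteratedDeriv 1 g (x + t)
          - (a1 + a2 * t + a3 * t ^ 2 / 2 + a4 * t ^ 3 / 6))
        = fun t => iteratedDeriv 2 g (x + t) - (a2 + a3 * t + a4 * t ^ 2 / 2) := by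
      funext t; rw [(hu1d t).deriv]; ring
    rw [e1]; exact o2
  -- level 0
  have hg0 : ∀ t : ℝ, HasDerivAt (fun t => g (x + t)) (iteratedDeriv 1 g (x + t)) t := by
    intro t
    have := hshift 0 (by norm_num) t
    simpa [iteratedDeriv_zero] using this
  have hu0d : ∀ t : ℝ, HasDerivAt
      (fun t => g (x + t) - (a0 + a1 * t + a2 * t ^ 2 / 2 + a3 * t ^ 3 / 6 + a4 * t ^ 4 / 24))
      (iteratedDeriv 1 g (x + t)
        - (a1 * 1 + a2 * (2 * t ^ 1) / 2 + a3 * (3 * t ^ 2) / 6 + a4 * (4 * t ^ 3) / 24)) t :=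
    fun t =>
    (hg0 t).sub
      ((((((hasDerivAt_id t).const_mul a1).const_add a0).add
        (((hasDerivAt_pow 2 t).const_mul a2).div_const 2)).add
        (((hasDerivAt_pow 3 t).const_mul a3).div_const 6)).add
        (((hasDerivAt_pow 4 t).const_mul a4).div_const 24))
  refine littleO_step (fun t => (hu0d t).differentiableAt) (by simp [ha0]) ?_
  have e0 : deriv (fun t : ℝ => g (x + t)
        - (a0 + a1 * t + a2 * t ^ 2 / 2 + a3 * t ^ 3 / 6 + a4 * t ^ 4 / 24))
      = fun t => iteratedDeriv 1 g (x + t) - (a1 + a2 * t + a3 * t ^ 2 / 2 + a4 * t ^ 3 / 6) := by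
    funext t; rw [(hu0d t).deriv]; ring
  rw [e0]; exact o1

lemma pow_isBigO_pow {a b : ℕ} (hab : b ≤ a) :
    (fun h : ℝ => h ^ a) =O[𝓝 (0:ℝ)] fun h => h ^ b := by
  rw [isBigO_iff]
  refine ⟨1, ?_⟩
  have hev : ∀ᶠ h : ℝ in 𝓝 0, |h| ≤ 1 := by
    filter_upwards [Metric.ball_mem_nhds (0:ℝ) one_pos] with h hh
    exact le_of_lt (by simpa [Real.dist_eq] using hh)
  filter_upwards [hev] with h hh
  rw [one_mul, Real.norm_eq_abs, Real.norm_eq_abs, abs_pow, abs_pow]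
  exact pow_le_pow_of_le_one (abs_nonneg h) hh hab

lemma pow_isLittleO_pow {a b : ℕ} (hab : b < a) :
    (fun h : ℝ => h ^ a) =o[𝓝 (0:ℝ)] fun h => h ^ b := by
  have h1 : (fun h : ℝ => h ^ a) = fun h : ℝ => h ^ b * h ^ (a - b) := by
    funext h; rw [← pow_add]; congr 1; omega
  rw [h1]
  have h2 : (fun h : ℝ => h ^ (a - b)) =o[𝓝 (0:ℝ)] (fun _ => (1:ℝ)) := by
    refine (isLittleO_one_iff ℝ).mpr ?_
    have := (continuous_pow (a - b)).tendsto (0:ℝ)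
    simpa [zero_pow (by omega : a - b ≠ 0)] using this
  have h3 := (isBigO_refl (fun h : ℝ => h ^ b) (𝓝 (0:ℝ))).mul_isLittleO h2
  simpa using h3

lemma mul_oO {f g : ℝ → ℝ} {a b c : ℕ}
    (hf : f =O[𝓝 (0:ℝ)] fun t => t ^ a) (hg : g =o[𝓝 (0:ℝ)] fun t => t ^ b)
    (hc : c ≤ a + b) : (fun t => f t * g t) =o[𝓝 (0:ℝ)] fun t => t ^ c := by
  have h1 := hf.mul_isLittleO hg
  have h2 : (fun t : ℝ => t ^ a * t ^ b) =O[𝓝 (0:ℝ)] fun t => t ^ c := by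
    have e : (fun t : ℝ => t ^ a * t ^ b) = fun t : ℝ => t ^ (a + b) := by
      funext t; rw [pow_add]
    rw [e]; exact pow_isBigO_pow hc
  exact h1.trans_isBigO h2

lemma mul_oO' {f g : ℝ → ℝ} {a b c : ℕ}
    (hf : f =o[𝓝 (0:ℝ)] fun t => t ^ a) (hg : g =O[𝓝 (0:ℝ)] fun t => t ^ b)
    (hc : c ≤ a + b) : (fun t => f t * g t) =o[𝓝 (0:ℝ)] fun t => t ^ c := by
  have h1 := hf.mul_isBigO hg
  have h2 : (fun t : ℝ => t ^ a * t ^ b) =O[𝓝 (0:ℝ)] fun t => t ^ c := by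
    have e : (fun t : ℝ => t ^ a * t ^ b) = fun t : ℝ => t ^ (a + b) := by
      funext t; rw [pow_add]
    rw [e]; exact pow_isBigO_pow hc
  exact h1.trans_isBigO h2

lemma pow_mul_cont_isBigO (m : ℕ) {Q : ℝ → ℝ} (hQ : Continuous Q) :
    (fun h : ℝ => h ^ m * Q h) =O[𝓝 (0:ℝ)] fun h => h ^ m := by
  have h1 : (fun h : ℝ => h ^ m * Q h) =O[𝓝 (0:ℝ)] fun h : ℝ => h ^ m * 1 :=
    (isBigO_refl (fun h : ℝ => h ^ m) _).mul ((hQ.tendsto 0).isBigO_one ℝ)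
  simpa using h1

set_option maxHeartbeats 4000000 in
lemma key2 (f1 f2 E1 E2 : ℝ → ℝ) (c1 c2 p q r s u v w z k : ℝ)
    (h1 : ∀ t, f1 t = c1 + p*t + r*t^2/2 + u*t^3/6 + w*t^4/24 + E1 t)
    (h2 : ∀ t, f2 t = c2 + q*t + s*t^2/2 + v*t^3/6 + z*t^4/24 + E2 t)
    (hE1 : E1 =o[𝓝 (0:ℝ)] fun t => t^4) (hE2 : E2 =o[𝓝 (0:ℝ)] fun t => t^4)
    (hd : p*s - q*r ≠ 0) :
    (fun h : ℝ =>
      ((f1 ((k-1)*h) - f1 (k*h)) * (f2 (k*h) - f2 ((k+1)*h))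
        - (f2 ((k-1)*h) - f2 (k*h)) * (f1 (k*h) - f1 ((k+1)*h))) /
      ((f1 ((k-1)*h) - f1 ((k+1)*h)) * (f2 (k*h) - f2 ((k+2)*h))
        - (f2 ((k-1)*h) - f2 ((k+1)*h)) * (f1 (k*h) - f1 ((k+2)*h)))
      - (1/4 - ((p*v - q*u)/(p*s - q*r)) * h / 8))
      =O[𝓝[≠] (0:ℝ)] fun h => h^2 := by
  set W : ℝ := (p*v - q*u)/(p*s - q*r) with hW
  set N : ℝ → ℝ := fun h =>
      (f1 ((k-1)*h) - f1 (k*h)) * (f2 (k*h) - f2 ((k+1)*h))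
        - (f2 ((k-1)*h) - f2 (k*h)) * (f1 (k*h) - f1 ((k+1)*h)) with hN
  set D : ℝ → ℝ := fun h =>
      (f1 ((k-1)*h) - f1 ((k+1)*h)) * (f2 (k*h) - f2 ((k+2)*h))
        - (f2 ((k-1)*h) - f2 ((k+1)*h)) * (f1 (k*h) - f1 ((k+2)*h)) with hD
  show (fun h : ℝ => N h / D h - (1/4 - W * h / 8)) =O[𝓝[≠] (0:ℝ)] fun h => h^2
  -- error chord functions
  set ea : ℝ → ℝ := fun h => E1 ((k-1)*h) - E1 (k*h) with hea
  set eb : ℝ → ℝ := fun h => E2 ((k-1)*h) - E2 (k*h) with heb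
  set ec : ℝ → ℝ := fun h => E1 (k*h) - E1 ((k+1)*h) with hec
  set ed : ℝ → ℝ := fun h => E2 (k*h) - E2 ((k+1)*h) with hed
  set ee : ℝ → ℝ := fun h => E1 ((k-1)*h) - E1 ((k+1)*h) with hee
  set ef : ℝ → ℝ := fun h => E2 ((k-1)*h) - E2 ((k+1)*h) with hef
  set eg : ℝ → ℝ := fun h => E1 (k*h) - E1 ((k+2)*h) with heg
  set eh' : ℝ → ℝ := fun h => E2 (k*h) - E2 ((k+2)*h) with heh
  -- polynomial chord functions
  set pa : ℝ → ℝ := fun h => h^1 * ((1/24 : ℝ)*w*h^3 + (-1/6 : ℝ)*w*k*h^3 + (1/4 : ℝ)*w*k^2*h^3 + (-1/6 : ℝ)*w*k^3*h^3 + (-1/6 : ℝ)*u*h^2 + (1/2 : ℝ)*u*k*h^2 + (-1/2 : ℝ)*u*k^2*h^2 + (1/2 : ℝ)*r*h + (-1 : ℝ)*r*k*h + (-1 : ℝ)*p) with hpa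
  set pb : ℝ → ℝ := fun h => h^1 * ((1/24 : ℝ)*z*h^3 + (-1/6 : ℝ)*z*k*h^3 + (1/4 : ℝ)*z*k^2*h^3 + (-1/6 : ℝ)*z*k^3*h^3 + (-1/6 : ℝ)*v*h^2 + (1/2 : ℝ)*v*k*h^2 + (-1/2 : ℝ)*v*k^2*h^2 + (1/2 : ℝ)*s*h + (-1 : ℝ)*s*k*h + (-1 : ℝ)*q) with hpb
  set pc : ℝ → ℝ := fun h => h^1 * ((-1/24 : ℝ)*w*h^3 + (-1/6 : ℝ)*w*k*h^3 + (-1/4 : ℝ)*w*k^2*h^3 + (-1/6 : ℝ)*w*k^3*h^3 + (-1/6 : ℝ)*u*h^2 + (-1/2 : ℝ)*u*k*h^2 + (-1/2 : ℝ)*u*k^2*h^2 + (-1/2 : ℝ)*r*h + (-1 : ℝ)*r*k*h + (-1 : ℝ)*p) with hpc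
  set pd : ℝ → ℝ := fun h => h^1 * ((-1/24 : ℝ)*z*h^3 + (-1/6 : ℝ)*z*k*h^3 + (-1/4 : ℝ)*z*k^2*h^3 + (-1/6 : ℝ)*z*k^3*h^3 + (-1/6 : ℝ)*v*h^2 + (-1/2 : ℝ)*v*k*h^2 + (-1/2 : ℝ)*v*k^2*h^2 + (-1/2 : ℝ)*s*h + (-1 : ℝ)*s*k*h + (-1 : ℝ)*q) with hpd
  set pe : ℝ → ℝ := fun h => h^1 * ((-1/3 : ℝ)*w*k*h^3 + (-1/3 : ℝ)*w*k^3*h^3 + (-1/3 : ℝ)*u*h^2 + (-1 : ℝ)*u*k^2*h^2 + (-2 : ℝ)*r*k*h + (-2 : ℝ)*p) with hpe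
  set pf : ℝ → ℝ := fun h => h^1 * ((-1/3 : ℝ)*z*k*h^3 + (-1/3 : ℝ)*z*k^3*h^3 + (-1/3 : ℝ)*v*h^2 + (-1 : ℝ)*v*k^2*h^2 + (-2 : ℝ)*s*k*h + (-2 : ℝ)*q) with hpf
  set pg2 : ℝ → ℝ := fun h => h^1 * ((-2/3 : ℝ)*w*h^3 + (-4/3 : ℝ)*w*k*h^3 + (-1 : ℝ)*w*k^2*h^3 + (-1/3 : ℝ)*w*k^3*h^3 + (-4/3 : ℝ)*u*h^2 + (-2 : ℝ)*u*k*h^2 + (-1 : ℝ)*u*k^2*h^2 + (-2 : ℝ)*r*h + (-2 : ℝ)*r*k*h + (-2 : ℝ)*p) with hpg2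
  set ph2 : ℝ → ℝ := fun h => h^1 * ((-2/3 : ℝ)*z*h^3 + (-4/3 : ℝ)*z*k*h^3 + (-1 : ℝ)*z*k^2*h^3 + (-1/3 : ℝ)*z*k^3*h^3 + (-4/3 : ℝ)*v*h^2 + (-2 : ℝ)*v*k*h^2 + (-1 : ℝ)*v*k^2*h^2 + (-2 : ℝ)*s*h + (-2 : ℝ)*s*k*h + (-2 : ℝ)*q) with hph2
  set NP : ℝ → ℝ := fun h => pa h * pd h - pb h * pc h with hNP
  set DP : ℝ → ℝ := fun h => pe h * ph2 h - pf h * pg2 h with hDP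
  set G : ℝ → ℝ := fun h => (1/36 : ℝ)*q*u*v*w*h^3 + (1/24 : ℝ)*q*u*v*w*k^2*h^3 + (1/12 : ℝ)*q*u*v*w*k^3*h^3 + (1/24 : ℝ)*q*u*v*w*k^4*h^3 + (-1/36 : ℝ)*q*u^2*z*h^3 + (-1/24 : ℝ)*q*u^2*z*k^2*h^3 + (-1/12 : ℝ)*q*u^2*z*k^3*h^3 + (-1/24 : ℝ)*q*u^2*z*k^4*h^3 + (1/12 : ℝ)*q*s*u*w*k*h^2 + (1/4 : ℝ)*q*s*u*w*k^2*h^2 + (1/6 : ℝ)*q*s*u*w*k^3*h^2 + (-1/12 : ℝ)*q*s*u^2*h + (1/4 : ℝ)*q*s*u^2*k*h + (1/4 : ℝ)*q*s*u^2*k^2*h + (-1/24 : ℝ)*q*r*v*w*h^2 + (-1/8 : ℝ)*q*r*v*w*k^2*h^2 + (-1/6 : ℝ)*q*r*v*w*k^3*h^2 + (1/24 : ℝ)*q*r*u*z*h^2 + (-1/12 : ℝ)*q*r*u*z*k*h^2 + (-1/8 : ℝ)*q*r*u*z*k^2*h^2 + (1/12 : ℝ)*q*r*u*v*h + (-1/4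 : ℝ)*q*r*u*v*k*h + (-1/4 : ℝ)*q*r*u*v*k^2*h + (-1/4 : ℝ)*q*r*s*w*k*h + (-1/2 : ℝ)*q*r*s*w*k^2*h + (-1/2 : ℝ)*q*r*s*u*k + (1/4 : ℝ)*q*r^2*z*k*h + (1/2 : ℝ)*q*r^2*z*k^2*h + (1/2 : ℝ)*q*r^2*v*k + (1/6 : ℝ)*q^2*u*w*h + (1/4 : ℝ)*q^2*u*w*k*h + (1/4 : ℝ)*q^2*u*w*k^2*h + (1/4 : ℝ)*q^2*u^2 + (1/2 : ℝ)*q^2*u^2*k + (-1/4 : ℝ)*q^2*r*w + (-1/2 : ℝ)*q^2*r*w*k + (-1/36 : ℝ)*p*v^2*w*h^3 + (-1/24 : ℝ)*p*v^2*w*k^2*h^3 + (-1/12 : ℝ)*p*v^2*w*k^3*h^3 + (-1/24 : ℝ)*p*v^2*w*k^4*h^3 + (1/36 : ℝ)*p*u*v*z*h^3 + (1/24 : ℝ)*p*u*v*z*k^2*h^3 + (1/12 : ℝ)*p*u*v*z*k^3*h^3 + (1/24 : ℝ)*p*u*v*z*k^4*h^3 + (1/24 : ℝ)*p*s*v*w*h^2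 + (-1/12 : ℝ)*p*s*v*w*k*h^2 + (-1/8 : ℝ)*p*s*v*w*k^2*h^2 + (-1/24 : ℝ)*p*s*u*z*h^2 + (-1/8 : ℝ)*p*s*u*z*k^2*h^2 + (-1/6 : ℝ)*p*s*u*z*k^3*h^2 + (1/12 : ℝ)*p*s*u*v*h + (-1/4 : ℝ)*p*s*u*v*k*h + (-1/4 : ℝ)*p*s*u*v*k^2*h + (1/4 : ℝ)*p*s^2*w*k*h + (1/2 : ℝ)*p*s^2*w*k^2*h + (1/2 : ℝ)*p*s^2*u*k + (1/12 : ℝ)*p*r*v*z*k*h^2 + (1/4 : ℝ)*p*r*v*z*k^2*h^2 + (1/6 : ℝ)*p*r*v*z*k^3*h^2 + (-1/12 : ℝ)*p*r*v^2*h + (1/4 : ℝ)*p*r*v^2*k*h + (1/4 : ℝ)*p*r*v^2*k^2*h + (-1/4 : ℝ)*p*r*s*z*k*h + (-1/2 : ℝ)*p*r*s*z*k^2*h + (-1/2 : ℝ)*p*r*s*v*k + (-1/6 : ℝ)*p*q*v*w*h + (-1/4 : ℝ)*p*q*v*w*k*h + (-1/4 : ℝ)*p*q*v*w*k^2*h +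 (-1/6 : ℝ)*p*q*u*z*h + (-1/4 : ℝ)*p*q*u*z*k*h + (-1/4 : ℝ)*p*q*u*z*k^2*h + (-1/2 : ℝ)*p*q*u*v + (-1 : ℝ)*p*q*u*v*k + (1/4 : ℝ)*p*q*s*w + (1/2 : ℝ)*p*q*s*w*k + (1/4 : ℝ)*p*q*r*z + (1/2 : ℝ)*p*q*r*z*k + (1/6 : ℝ)*p^2*v*z*h + (1/4 : ℝ)*p^2*v*z*k*h + (1/4 : ℝ)*p^2*v*z*k^2*h + (1/4 : ℝ)*p^2*v^2 + (1/2 : ℝ)*p^2*v^2*k + (-1/4 : ℝ)*p^2*s*z + (-1/2 : ℝ)*p^2*s*z*k with hG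
  set G2 : ℝ → ℝ := fun h => (-2/9 : ℝ)*v*w*h^3 + (-1/3 : ℝ)*v*w*k^2*h^3 + (-2/3 : ℝ)*v*w*k^3*h^3 + (-1/3 : ℝ)*v*w*k^4*h^3 + (2/9 : ℝ)*u*z*h^3 + (1/3 : ℝ)*u*z*k^2*h^3 + (2/3 : ℝ)*u*z*k^3*h^3 + (1/3 : ℝ)*u*z*k^4*h^3 + (-2/3 : ℝ)*s*w*k*h^2 + (-2 : ℝ)*s*w*k^2*h^2 + (-4/3 : ℝ)*s*w*k^3*h^2 + (2/3 : ℝ)*s*u*h + (-2 : ℝ)*s*u*k*h + (-2 : ℝ)*s*u*k^2*h + (2/3 : ℝ)*r*z*k*h^2 + (2 : ℝ)*r*z*k^2*h^2 + (4/3 : ℝ)*r*z*k^3*h^2 + (-2/3 : ℝ)*r*v*h + (2 : ℝ)*r*v*k*h + (2 : ℝ)*r*v*k^2*h + (-4/3 : ℝ)*q*w*h + (-2 : ℝ)*q*w*k*h + (-2 : ℝ)*q*w*k^2*h + (-2 : ℝ)*q*u + (-4 : ℝ)*q*u*k + (4/3 : ℝ)*p*z*h + (2 : ℝ)*p*z*k*h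 + (2 : ℝ)*p*z*k^2*h + (2 : ℝ)*p*v + (4 : ℝ)*p*v*k with hG2
  -- little-o for error chords
  have hcomp1 : ∀ c : ℝ, (fun h : ℝ => E1 (c*h)) =o[𝓝 (0:ℝ)] fun h => h^4 := by
    intro c
    have ht : Tendsto (fun h : ℝ => c*h) (𝓝 0) (𝓝 0) := by
      have hc : Continuous fun h : ℝ => c * h := by fun_prop
      simpa using hc.tendsto 0
    have h4 : (fun h : ℝ => (c*h)^4) =O[𝓝 (0:ℝ)] fun h => h^4 := by
      have e : (fun h : ℝ => (c*h)^4) = fun h : ℝ => c^4 * h^4 := by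
        funext h; rw [mul_pow]
      rw [e]; exact (isBigO_refl (fun h : ℝ => h^4) _).const_mul_left (c^4)
    exact (hE1.comp_tendsto ht).trans_isBigO h4
  have hcomp2 : ∀ c : ℝ, (fun h : ℝ => E2 (c*h)) =o[𝓝 (0:ℝ)] fun h => h^4 := by
    intro c
    have ht : Tendsto (fun h : ℝ => c*h) (𝓝 0) (𝓝 0) := by
      have hc : Continuous fun h : ℝ => c * h := by fun_prop
      simpa using hc.tendsto 0
    have h4 : (fun h : ℝ => (c*h)^4) =O[𝓝 (0:ℝ)] fun h => h^4 := by
      have e : (fun h : ℝ => (c*h)^4) = fun h : ℝ => c^4 * h^4 := by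
        funext h; rw [mul_pow]
      rw [e]; exact (isBigO_refl (fun h : ℝ => h^4) _).const_mul_left (c^4)
    exact (hE2.comp_tendsto ht).trans_isBigO h4
  have heaO : ea =o[𝓝 (0:ℝ)] fun h => h^4 := (hcomp1 (k-1)).sub (hcomp1 k)
  have hebO : eb =o[𝓝 (0:ℝ)] fun h => h^4 := (hcomp2 (k-1)).sub (hcomp2 k)
  have hecO : ec =o[𝓝 (0:ℝ)] fun h => h^4 := (hcomp1 k).sub (hcomp1 (k+1))
  have hedO : ed =o[𝓝 (0:ℝ)] fun h => h^4 := (hcomp2 k).sub (hcomp2 (k+1))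
  have heeO : ee =o[𝓝 (0:ℝ)] fun h => h^4 := (hcomp1 (k-1)).sub (hcomp1 (k+1))
  have hefO : ef =o[𝓝 (0:ℝ)] fun h => h^4 := (hcomp2 (k-1)).sub (hcomp2 (k+1))
  have hegO : eg =o[𝓝 (0:ℝ)] fun h => h^4 := (hcomp1 k).sub (hcomp1 (k+2))
  have hehO : eh' =o[𝓝 (0:ℝ)] fun h => h^4 := (hcomp2 k).sub (hcomp2 (k+2))
  -- big-O for polynomial chords
  have hpaO : pa =O[𝓝 (0:ℝ)] fun h => h^1 := by rw [hpa]; exact pow_mul_cont_isBigO 1 (by fun_prop)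
  have hpbO : pb =O[𝓝 (0:ℝ)] fun h => h^1 := by rw [hpb]; exact pow_mul_cont_isBigO 1 (by fun_prop)
  have hpcO : pc =O[𝓝 (0:ℝ)] fun h => h^1 := by rw [hpc]; exact pow_mul_cont_isBigO 1 (by fun_prop)
  have hpdO : pd =O[𝓝 (0:ℝ)] fun h => h^1 := by rw [hpd]; exact pow_mul_cont_isBigO 1 (by fun_prop)
  have hpeO : pe =O[𝓝 (0:ℝ)] fun h => h^1 := by rw [hpe]; exact pow_mul_cont_isBigO 1 (by fun_prop)
  have hpfO : pf =O[𝓝 (0:ℝ)] fun h => h^1 := by rw [hpf]; exact pow_mul_cont_isBigO 1 (by fun_prop)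
  have hpg2O : pg2 =O[𝓝 (0:ℝ)] fun h => h^1 := by rw [hpg2]; exact pow_mul_cont_isBigO 1 (by fun_prop)
  have hph2O : ph2 =O[𝓝 (0:ℝ)] fun h => h^1 := by rw [hph2]; exact pow_mul_cont_isBigO 1 (by fun_prop)
  -- decomposition identities
  have hNid : ∀ h : ℝ, N h = NP h +
      (pa h * ed h + ea h * pd h + ea h * ed h
        - (pb h * ec h + eb h * pc h + eb h * ec h)) := by
    intro h
    simp only [hN, hNP, hpa, hpb, hpc, hpd, hea, heb, hec, hed, h1, h2]
    ring
  have hDid : ∀ h : ℝ, D h = DP h +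
      (pe h * eh' h + ee h * ph2 h + ee h * eh' h
        - (pf h * eg h + ef h * pg2 h + ef h * eg h)) := by
    intro h
    simp only [hD, hDP, hpe, hpf, hpg2, hph2, hee, hef, heg, heh, h1, h2]
    ring
  -- cross-term bounds
  have hcrossN : (fun h : ℝ => pa h * ed h + ea h * pd h + ea h * ed h
      - (pb h * ec h + eb h * pc h + eb h * ec h)) =o[𝓝 (0:ℝ)] fun h => h^5 :=
    (((mul_oO hpaO hedO (by norm_num)).add (mul_oO' heaO hpdO (by norm_num))).add
      (mul_oO' heaO hedO.isBigO (by norm_num))).sub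
    (((mul_oO hpbO hecO (by norm_num)).add (mul_oO' hebO hpcO (by norm_num))).add
      (mul_oO' hebO hecO.isBigO (by norm_num)))
  have hcrossD : (fun h : ℝ => pe h * eh' h + ee h * ph2 h + ee h * eh' h
      - (pf h * eg h + ef h * pg2 h + ef h * eg h)) =o[𝓝 (0:ℝ)] fun h => h^5 :=
    (((mul_oO hpeO hehO (by norm_num)).add (mul_oO' heeO hph2O (by norm_num))).add
      (mul_oO' heeO hehO.isBigO (by norm_num))).sub
    (((mul_oO hpfO hegO (by norm_num)).add (mul_oO' hefO hpg2O (by norm_num))).add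
      (mul_oO' hefO hegO.isBigO (by norm_num)))
  -- the fundamental polynomial identity
  have hpoly : ∀ h : ℝ, (p*s - q*r) * NP h - ((p*s - q*r)/4 - (p*v - q*u)*h/8) * DP h
      = h^5 * G h := by
    intro h
    simp only [hNP, hDP, hpa, hpb, hpc, hpd, hpe, hpf, hpg2, hph2, hG]
    ring
  have hDP3 : ∀ h : ℝ, DP h = 4*(p*s - q*r)*h^3 + h^4 * G2 h := by
    intro h
    simp only [hDP, hpe, hpf, hpg2, hph2, hG2]
    ring
  have hGc : Continuous G := by rw [hG]; fun_prop
  have hG2c : Continuous G2 := by rw [hG2]; fun_prop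
  have hNPDP : ∀ h : ℝ, NP h - (1/4 - W*h/8) * DP h = h^5 * (G h / (p*s - q*r)) := by
    intro h
    refine mul_left_cancel₀ hd ?_
    have e1 : (p*s - q*r) * (NP h - (1/4 - W*h/8) * DP h)
        = (p*s - q*r) * NP h - ((p*s - q*r)/4 - (p*v - q*u)*h/8) * DP h := by
      rw [hW]; field_simp
    have e2 : (p*s - q*r) * (h^5 * (G h / (p*s - q*r))) = h^5 * G h := by
      field_simp
    rw [e1, e2]; exact hpoly h
  have hNPbig : (fun h : ℝ => NP h - (1/4 - W*h/8) * DP h) =O[𝓝 (0:ℝ)] fun h => h^5 := by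
    have e : (fun h : ℝ => NP h - (1/4 - W*h/8) * DP h)
        = fun h : ℝ => h^5 * (G h / (p*s - q*r)) := funext hNPDP
    rw [e]
    exact pow_mul_cont_isBigO 5 (hGc.div_const _)
  have hWc : Continuous fun h : ℝ => 1/4 - W*h/8 := by fun_prop
  have hWO : (fun h : ℝ => 1/4 - W*h/8) =O[𝓝 (0:ℝ)] (fun _ => (1:ℝ)) := by
    have := (hWc.tendsto 0).isBigO_one ℝ
    exact this
  -- main numerator bound
  have hbigkey : (fun h : ℝ => N h - (1/4 - W*h/8) * D h) =O[𝓝 (0:ℝ)] fun h => h^5 := by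
    have e : (fun h : ℝ => N h - (1/4 - W*h/8) * D h)
        = fun h : ℝ => (NP h - (1/4 - W*h/8) * DP h)
          + ((pa h * ed h + ea h * pd h + ea h * ed h
              - (pb h * ec h + eb h * pc h + eb h * ec h))
            - (1/4 - W*h/8) * (pe h * eh' h + ee h * ph2 h + ee h * eh' h
              - (pf h * eg h + ef h * pg2 h + ef h * eg h))) := by
      funext h; rw [hNid h, hDid h]; ring
    rw [e]
    refine hNPbig.add ?_
    have hterm2 : (fun h : ℝ => (1/4 - W*h/8) * (pe h * eh' h + ee h * ph2 h + ee h * eh' h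
        - (pf h * eg h + ef h * pg2 h + ef h * eg h))) =o[𝓝 (0:ℝ)] fun h => h^5 := by
      have := hWO.mul_isLittleO hcrossD
      refine this.trans_isBigO ?_
      exact isBigO_of_le _ fun h => by simp
    exact (hcrossN.sub hterm2).isBigO
  -- denominator asymptotics
  have hDo : (fun h : ℝ => D h - 4*(p*s - q*r)*h^3) =o[𝓝 (0:ℝ)] fun h => h^3 := by
    have e : (fun h : ℝ => D h - 4*(p*s - q*r)*h^3)
        = fun h : ℝ => h^4 * G2 h + (pe h * eh' h + ee h * ph2 h + ee h * eh' h
            - (pf h * eg h + ef h * pg2 h + ef h * eg h)) := by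
      funext h; rw [hDid h, hDP3 h]; ring
    rw [e]
    exact ((pow_mul_cont_isBigO 4 hG2c).trans_isLittleO
      (pow_isLittleO_pow (by norm_num))).add
      (hcrossD.trans_isBigO (pow_isBigO_pow (by norm_num)))
  have h4ne : (4*(p*s - q*r)) ≠ 0 := mul_ne_zero (by norm_num) hd
  have hDtend : Tendsto (fun h : ℝ => D h / h^3) (𝓝[≠] (0:ℝ)) (𝓝 (4*(p*s - q*r))) := by
    have h0 := hDo.tendsto_div_nhds_zero
    have hadd : Tendsto (fun h : ℝ => (D h - 4*(p*s - q*r)*h^3)/h^3 + 4*(p*s - q*r))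
        (𝓝[≠] (0:ℝ)) (𝓝 (0 + 4*(p*s - q*r))) :=
      (h0.mono_left nhdsWithin_le_nhds).add tendsto_const_nhds
    rw [zero_add] at hadd
    refine Filter.Tendsto.congr' ?_ hadd
    filter_upwards [self_mem_nhdsWithin] with h hh
    have hh0 : h ≠ 0 := hh
    field_simp
    ring
  have hDne : ∀ᶠ h in 𝓝[≠] (0:ℝ), D h ≠ 0 := by
    filter_upwards [hDtend.eventually_ne h4ne] with h hne hD0
    exact hne (by rw [hD0]; simp)
  have hODl : (fun h : ℝ => h^3) =O[𝓝[≠] (0:ℝ)] D := by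
    have hinv : Tendsto (fun h : ℝ => h^3 / D h) (𝓝[≠] (0:ℝ)) (𝓝 (4*(p*s - q*r))⁻¹) := by
      have := hDtend.inv₀ h4ne
      exact this.congr fun h => inv_div _ _
    have hb := hinv.isBigO_one ℝ
    have hmul := hb.mul (isBigO_refl D (𝓝[≠] (0:ℝ)))
    refine hmul.congr' ?_ ?_
    · filter_upwards [hDne] with h hD0
      exact div_mul_cancel₀ _ hD0
    · filter_upwards with h
      simp
  -- put everything together
  obtain ⟨C1, hC1⟩ := (hbigkey.mono nhdsWithin_le_nhds).bound
  obtain ⟨C2, hC2⟩ := hODl.bound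
  rw [isBigO_iff]
  refine ⟨|C1| * |C2|, ?_⟩
  filter_upwards [hC1, hC2, hDne, self_mem_nhdsWithin] with h hb1 hb2 hD0 hh0'
  have hh0 : h ≠ 0 := hh0'
  have hDpos : 0 < |D h| := abs_pos.mpr hD0
  have hq : N h / D h - (1/4 - W*h/8) = (N h - (1/4 - W*h/8) * D h) / D h := by
    field_simp
  rw [hq]
  simp only [Real.norm_eq_abs] at hb1 hb2 ⊢
  rw [abs_div, div_le_iff₀ hDpos]
  have hb1' : |N h - (1/4 - W*h/8) * D h| ≤ |C1| * |h|^5 := by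
    calc |N h - (1/4 - W*h/8) * D h| ≤ C1 * |h^5| := hb1
      _ = C1 * |h|^5 := by rw [abs_pow]
      _ ≤ |C1| * |h|^5 := mul_le_mul_of_nonneg_right (le_abs_self C1) (by positivity)
  have hb2' : |h|^3 ≤ |C2| * |D h| := by
    calc |h|^3 = |h^3| := (abs_pow h 3).symm
      _ ≤ C2 * |D h| := hb2
      _ ≤ |C2| * |D h| := mul_le_mul_of_nonneg_right (le_abs_self C2) (abs_nonneg _)
  calc |N h - (1/4 - W*h/8) * D h| ≤ |C1| * |h|^5 := hb1'
    _ = (|C1| * |h|^2) * |h|^3 := by ring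
    _ ≤ (|C1| * |h|^2) * (|C2| * |D h|) := by
        exact mul_le_mul_of_nonneg_left hb2' (by positivity)
    _ = |C1| * |C2| * |h^2| * |D h| := by rw [abs_pow]; ring

/-- auxiliary: component-wise iterated derivative (first component). -/
lemma iteratedDeriv_fst {γ : ℝ → ℝ × ℝ} (hγ : ContDiff ℝ 4 γ) (x : ℝ) (m : ℕ) (hm : m ≤ 4) :
    iteratedDeriv m (fun t => (γ t).1) x = (iteratedDeriv m γ x).1 := by
  have e : (fun t => (γ t).1) = (ContinuousLinearMap.fst ℝ ℝ ℝ) ∘ γ := rfl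
  rw [e, iteratedDeriv_eq_iteratedFDeriv, iteratedDeriv_eq_iteratedFDeriv,
    ContinuousLinearMap.iteratedFDeriv_comp_left _ hγ.contDiffAt (by exact_mod_cast hm)]
  rfl

lemma iteratedDeriv_snd {γ : ℝ → ℝ × ℝ} (hγ : ContDiff ℝ 4 γ) (x : ℝ) (m : ℕ) (hm : m ≤ 4) :
    iteratedDeriv m (fun t => (γ t).2) x = (iteratedDeriv m γ x).2 := by
  have e : (fun t => (γ t).2) = (ContinuousLinearMap.snd ℝ ℝ ℝ) ∘ γ := rfl
  rw [e, iteratedDeriv_eq_iteratedFDeriv, iteratedDeriv_eq_iteratedFDeriv,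
    ContinuousLinearMap.iteratedFDeriv_comp_left _ hγ.contDiffAt (by exact_mod_cast hm)]
  rfl

theorem stmt9 (γ : ℝ → ℝ × ℝ) (hγ : ContDiff ℝ 4 γ) (x : ℝ)
    (hnd : det2 (deriv γ x) (iteratedDeriv 2 γ x) ≠ 0) (k : ℝ) :
    (fun n : ℕ =>
        det2 (γ (x + (k - 1) / n) - γ (x + k / n)) (γ (x + k / n) - γ (x + (k + 1) / n)) /
          det2 (γ (x + (k - 1) / n) - γ (x + (k + 1) / n)) (γ (x + k / n) - γ (x + (k + 2) / n))
        - (1 / 4 - Wc γ x / (8 * n)))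
      =O[atTop] fun n : ℕ => (1 : ℝ) / (n : ℝ) ^ 2 := by
  set γ1 : ℝ → ℝ := fun t => (γ t).1 with hγ1def
  set γ2 : ℝ → ℝ := fun t => (γ t).2 with hγ2def
  have hγ1 : ContDiff ℝ 4 γ1 := (ContinuousLinearMap.fst ℝ ℝ ℝ).contDiff.comp hγ
  have hγ2 : ContDiff ℝ 4 γ2 := (ContinuousLinearMap.snd ℝ ℝ ℝ).contDiff.comp hγ
  set p := iteratedDeriv 1 γ1 x with hp
  set q := iteratedDeriv 1 γ2 x with hq
  set r := iteratedDeriv 2 γ1 x with hr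
  set s' := iteratedDeriv 2 γ2 x with hs'
  set u := iteratedDeriv 3 γ1 x with hu
  set v := iteratedDeriv 3 γ2 x with hv
  set w := iteratedDeriv 4 γ1 x with hw
  set z := iteratedDeriv 4 γ2 x with hz
  have hdet2 : det2 (deriv γ x) (iteratedDeriv 2 γ x) = p * s' - q * r := by
    simp only [det2, ← iteratedDeriv_one]
    rw [hp, hq, hr, hs', iteratedDeriv_fst hγ x 1 (by norm_num),
      iteratedDeriv_fst hγ x 2 (by norm_num), iteratedDeriv_snd hγ x 1 (by norm_num),
      iteratedDeriv_snd hγ x 2 (by norm_num)]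
  have hdet3 : det2 (deriv γ x) (iteratedDeriv 3 γ x) = p * v - q * u := by
    simp only [det2, ← iteratedDeriv_one]
    rw [hp, hq, hu, hv, iteratedDeriv_fst hγ x 1 (by norm_num),
      iteratedDeriv_fst hγ x 3 (by norm_num), iteratedDeriv_snd hγ x 1 (by norm_num),
      iteratedDeriv_snd hγ x 3 (by norm_num)]
  have hWval : Wc γ x = (p * v - q * u) / (p * s' - q * r) := by
    rw [Wc, hdet2, hdet3]
  have hd : p * s' - q * r ≠ 0 := by rw [← hdet2]; exact hnd
  have hE1 : (fun t => γ1 (x + t) - (γ1 x + p*t + r*t^2/2 + u*t^3/6 + w*t^4/24))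
      =o[𝓝 (0:ℝ)] fun t => t^4 := by
    rw [hp, hr, hu, hw]; exact taylor4 hγ1 x
  have hE2 : (fun t => γ2 (x + t) - (γ2 x + q*t + s'*t^2/2 + v*t^3/6 + z*t^4/24))
      =o[𝓝 (0:ℝ)] fun t => t^4 := by
    rw [hq, hs', hv, hz]; exact taylor4 hγ2 x
  have h1 : ∀ t, (fun t => γ1 (x + t)) t = γ1 x + p*t + r*t^2/2 + u*t^3/6 + w*t^4/24
      + (fun t => γ1 (x + t) - (γ1 x + p*t + r*t^2/2 + u*t^3/6 + w*t^4/24)) t := by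
    intro t; simp only []; ring
  have h2 : ∀ t, (fun t => γ2 (x + t)) t = γ2 x + q*t + s'*t^2/2 + v*t^3/6 + z*t^4/24
      + (fun t => γ2 (x + t) - (γ2 x + q*t + s'*t^2/2 + v*t^3/6 + z*t^4/24)) t := by
    intro t; simp only []; ring
  have happ := key2 (fun t => γ1 (x + t)) (fun t => γ2 (x + t)) _ _ (γ1 x) (γ2 x)
    p q r s' u v w z k h1 h2 hE1 hE2 hd
  have htend : Tendsto (fun n : ℕ => 1/(n:ℝ)) atTop (𝓝[≠] (0:ℝ)) := by
    refine tendsto_nhdsWithin_of_tendsto_nhds_of_eventually_within _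
      tendsto_one_div_atTop_nhds_zero_nat ?_
    filter_upwards [eventually_gt_atTop 0] with n hn
    simp only [Set.mem_compl_iff, Set.mem_singleton_iff]
    exact one_div_ne_zero (Nat.cast_ne_zero.mpr hn.ne')
  have hcomp := happ.comp_tendsto htend
  refine hcomp.congr' ?_ ?_
  · filter_upwards with n
    simp only [Function.comp_apply, det2, Prod.fst_sub, Prod.snd_sub, hWval, mul_one_div]
    ring
  · filter_upwards with n
    simp only [Function.comp_apply, div_pow, one_pow]
end
end

section
/- Let pᵢ be the intersection of the lines (v_{i−2}v_{i+1}) and (v_{i−1}v_{i+2}), where vⱼ = γ(j/n) for a smooth curve γ with [γ', γ''] ≠ 0 and W = [γ', γ''']/[γ', γ'']. Then n²·(pᵢ − γ(i/n)) = γ''(i/n) − (2/3)·W(i/n)·γ'(i/n) + O(1/n) as n → ∞. -/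
open Filter Asymptotics Set

noncomputable section

variable {E : Type*} [NormedAddCommGroup E] [NormedSpace ℝ E]

lemma eqOn_iteratedDerivWithin {f : ℝ → E} {s : Set ℝ} (hs : UniqueDiffOn ℝ s)
    {m : ℕ} (hf : ContDiff ℝ 4 f) (hm : m ≤ 4) :
    Set.EqOn (iteratedDerivWithin m f s) (iteratedDeriv m f) s := by
  induction m with
  | zero => intro x hx; simp [iteratedDerivWithin_zero, iteratedDeriv_zero]
  | succ k ih =>
    intro x hx
    have hk4 : k ≤ 4 := by omega
    have hdiff : DifferentiableAt ℝ (iteratedDeriv k f) x := by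
      have : (k : WithTop ℕ∞) < 4 := by exact_mod_cast (by omega : k < 4)
      exact (hf.differentiable_iteratedDeriv k this).differentiableAt
    rw [iteratedDerivWithin_succ, derivWithin_congr (ih hk4) (ih hk4 hx),
      hdiff.derivWithin (hs x hx), ← iteratedDeriv_succ]

lemma taylor_onesided {f : ℝ → E} (hf : ContDiff ℝ 4 f) {M t u : ℝ} (hu : 0 < u)
    (hM : ∀ y ∈ Icc t (t + u), ‖iteratedDeriv 4 f y‖ ≤ M) :
    ‖f (t + u) - f t - u • deriv f t - (u ^ 2 / 2) • iteratedDeriv 2 f t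
        - (u ^ 3 / 6) • iteratedDeriv 3 f t‖ ≤ M * u ^ 4 / 6 := by
  have hab : t ≤ t + u := by linarith
  have hs : UniqueDiffOn ℝ (Icc t (t + u)) := uniqueDiffOn_Icc (by linarith)
  have hmem : t + u ∈ Icc t (t + u) := by constructor <;> linarith
  have htmem : t ∈ Icc t (t + u) := by constructor <;> linarith
  have hfon : ContDiffOn ℝ ((3 : ℕ) + 1) f (Icc t (t + u)) := by
    exact_mod_cast hf.contDiffOn
  have key := taylor_mean_remainder_bound (n := 3) hab hfon hmem (fun y hy => by
    rw [eqOn_iteratedDerivWithin hs hf (by norm_num) hy]; exact hM y hy)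
  rw [taylor_within_apply] at key
  simp only [Finset.sum_range_succ, Finset.sum_range_zero, zero_add] at key
  rw [eqOn_iteratedDerivWithin hs hf (by norm_num) htmem,
    eqOn_iteratedDerivWithin hs hf (by norm_num) htmem,
    eqOn_iteratedDerivWithin hs hf (by norm_num) htmem,
    eqOn_iteratedDerivWithin hs hf (by norm_num) htmem] at key
  have h1 : t + u - t = u := by ring
  rw [h1] at key
  simp only [iteratedDeriv_zero, iteratedDeriv_one] at key
  norm_num [Nat.factorial] at key ⊢
  calc ‖f (t + u) - f t - u • deriv f t - (u ^ 2 / 2) • iteratedDeriv 2 f t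
        - (u ^ 3 / 6) • iteratedDeriv 3 f t‖
      = ‖f (t + u) - (f t + u • deriv f t + (2⁻¹ * u ^ 2) • iteratedDeriv 2 f t
          + (6⁻¹ * u ^ 3) • iteratedDeriv 3 f t)‖ := by
        congr 1
        rw [show (2⁻¹ * u ^ 2 : ℝ) = u ^ 2 / 2 by ring, show (6⁻¹ * u ^ 3 : ℝ) = u ^ 3 / 6 by ring]
        abel
    _ ≤ M * u ^ 4 / 6 := by convert key using 2 <;> ring_nf

lemma taylor_twosided {f : ℝ → E} (hf : ContDiff ℝ 4 f) {M t u : ℝ}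
    (hM : ∀ y ∈ Icc (-2 : ℝ) 2, ‖iteratedDeriv 4 f y‖ ≤ M)
    (ht : t ∈ Icc (-1 : ℝ) 1) (hu : u ∈ Icc (-1 : ℝ) 1) :
    ‖f (t + u) - f t - u • deriv f t - (u ^ 2 / 2) • iteratedDeriv 2 f t
        - (u ^ 3 / 6) • iteratedDeriv 3 f t‖ ≤ M * u ^ 4 / 6 := by
  obtain ⟨ht1, ht2⟩ := ht
  obtain ⟨hu1, hu2⟩ := hu
  rcases lt_trichotomy u 0 with hneg | rfl | hpos
  · -- reflect
    set g : ℝ → E := fun y => f (-y) with hg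
    have hgc : ContDiff ℝ 4 g := hf.comp (contDiff_neg)
    have hder : ∀ k : ℕ, ∀ y : ℝ, iteratedDeriv k g y = ((-1 : ℝ) ^ k) • iteratedDeriv k f (-y) :=
      fun k y => iteratedDeriv_comp_neg k f y
    have hM' : ∀ y ∈ Icc (-t) (-t + -u), ‖iteratedDeriv 4 g y‖ ≤ M := by
      intro y hy
      rw [hder 4 y]
      simp only [norm_smul, norm_pow, norm_neg, norm_one, one_pow, one_mul]
      exact hM (-y) ⟨by linarith [hy.2], by linarith [hy.1]⟩
    have key := taylor_onesided hgc (by linarith : (0:ℝ) < -u) hM'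
    have e0 : g (-t + -u) = f (t + u) := by simp [hg]; ring_nf
    have e1 : g (-t) = f t := by simp [hg]
    have e2 : deriv g (-t) = -(deriv f t) := by
      have := hder 1 (-t); simpa [iteratedDeriv_one] using this
    have e3 : iteratedDeriv 2 g (-t) = iteratedDeriv 2 f t := by simpa using hder 2 (-t)
    have e4 : iteratedDeriv 3 g (-t) = -(iteratedDeriv 3 f t) := by
      rw [hder 3 (-t), neg_neg]; norm_num
    rw [e0, e1, e2, e3, e4] at key
    have harg : f (t + u) - f t - u • deriv f t - (u ^ 2 / 2) • iteratedDeriv 2 f t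
          - (u ^ 3 / 6) • iteratedDeriv 3 f t
        = f (t + u) - f t - (-u) • -deriv f t - ((-u) ^ 2 / 2) • iteratedDeriv 2 f t
          - ((-u) ^ 3 / 6) • -iteratedDeriv 3 f t := by module
    rw [harg]
    calc ‖f (t + u) - f t - (-u) • -deriv f t - ((-u) ^ 2 / 2) • iteratedDeriv 2 f t
          - ((-u) ^ 3 / 6) • -iteratedDeriv 3 f t‖
        ≤ M * (-u) ^ 4 / 6 := key
      _ = M * u ^ 4 / 6 := by ring_nf
  · simpa using by positivity
  · exact taylor_onesided hf hpos (fun y hy =>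
      hM y ⟨by linarith [hy.1], by linarith [hy.2]⟩)

lemma taylorSeq {f : ℝ → E} (hf : ContDiff ℝ 4 f) {t u : ℕ → ℝ}
    (ht : Tendsto t atTop (nhds 0)) (hu : Tendsto u atTop (nhds 0)) :
    (fun n => f (t n + u n) - f (t n) - (u n) • deriv f (t n)
        - ((u n) ^ 2 / 2) • iteratedDeriv 2 f (t n)
        - ((u n) ^ 3 / 6) • iteratedDeriv 3 f (t n)) =O[atTop] fun n => (u n) ^ 4 := by
  obtain ⟨M, hM⟩ : ∃ M, ∀ y ∈ Icc (-2 : ℝ) 2, ‖iteratedDeriv 4 f y‖ ≤ M :=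
    isCompact_Icc.exists_bound_of_continuousOn (hf.continuous_iteratedDeriv 4 le_rfl).continuousOn
  rw [isBigO_iff]
  refine ⟨M / 6, ?_⟩
  have h1 : ∀ᶠ n in atTop, t n ∈ Icc (-1 : ℝ) 1 :=
    ht.eventually_mem (Icc_mem_nhds (by norm_num) (by norm_num))
  have h2 : ∀ᶠ n in atTop, u n ∈ Icc (-1 : ℝ) 1 :=
    hu.eventually_mem (Icc_mem_nhds (by norm_num) (by norm_num))
  filter_upwards [h1, h2] with n hn1 hn2
  have := taylor_twosided hf hM hn1 hn2
  calc ‖f (t n + u n) - f (t n) - u n • deriv f (t n) - (u n ^ 2 / 2) • iteratedDeriv 2 f (t n)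
        - (u n ^ 3 / 6) • iteratedDeriv 3 f (t n)‖
      ≤ M * (u n) ^ 4 / 6 := this
    _ = M / 6 * ‖(u n) ^ 4‖ := by
        rw [Real.norm_eq_abs, abs_of_nonneg (by positivity : (0:ℝ) ≤ (u n)^4)]; ring

lemma det2_isBigO {X Y : ℕ → ℝ × ℝ} {fx fy : ℕ → ℝ}
    (hX : X =O[atTop] fx) (hY : Y =O[atTop] fy) :
    (fun n => det2 (X n) (Y n)) =O[atTop] fun n => fx n * fy n := by
  have hX1 : (fun n => (X n).1) =O[atTop] fx :=
    (isBigO_of_le _ fun n => norm_fst_le (X n)).trans hX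
  have hX2 : (fun n => (X n).2) =O[atTop] fx :=
    (isBigO_of_le _ fun n => norm_snd_le (X n)).trans hX
  have hY1 : (fun n => (Y n).1) =O[atTop] fy :=
    (isBigO_of_le _ fun n => norm_fst_le (Y n)).trans hY
  have hY2 : (fun n => (Y n).2) =O[atTop] fy :=
    (isBigO_of_le _ fun n => norm_snd_le (Y n)).trans hY
  exact (hX1.mul hY2).sub (hX2.mul hY1)

lemma det2_add_add (x r y s : ℝ × ℝ) :
    det2 (x + r) (y + s) = det2 x y + det2 x s + det2 r y + det2 r s := by
  simp [det2]; ring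

lemma det2_trip (a1 a2 a3 b1 b2 b3 : ℝ) (g1 g2 g3 : ℝ × ℝ) :
    det2 (a1 • g1 + a2 • g2 + a3 • g3) (b1 • g1 + b2 • g2 + b3 • g3)
      = (a1 * b2 - a2 * b1) * det2 g1 g2 + (a1 * b3 - a3 * b1) * det2 g1 g3
        + (a2 * b3 - a3 * b2) * det2 g2 g3 := by
  simp [det2, Prod.smul_fst, Prod.smul_snd, smul_eq_mul]; ring

/-! ### definitions -/

def hseq (n : ℕ) : ℝ := ((n : ℝ))⁻¹

variable (γ : ℝ → ℝ × ℝ) (i : ℤ)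

def g1f (n : ℕ) : ℝ × ℝ := deriv γ ((i : ℝ)/n)
def g2f (n : ℕ) : ℝ × ℝ := iteratedDeriv 2 γ ((i : ℝ)/n)
def g3f (n : ℕ) : ℝ × ℝ := iteratedDeriv 3 γ ((i : ℝ)/n)
def Kf (n : ℕ) : ℝ := det2 (g1f γ i n) (g2f γ i n)
def Lf (n : ℕ) : ℝ := det2 (g1f γ i n) (g3f γ i n)
def Mdf (n : ℕ) : ℝ := det2 (g2f γ i n) (g3f γ i n)

def Pf (s : ℝ) (n : ℕ) : ℝ × ℝ :=
  (s * hseq n) • g1f γ i n + ((s * hseq n)^2/2) • g2f γ i n + ((s * hseq n)^3/6) • g3f γ i n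

def Rf (s : ℝ) (n : ℕ) : ℝ × ℝ :=
  γ (((i : ℝ) + s)/n) - γ ((i : ℝ)/n) - (s * hseq n) • g1f γ i n
    - ((s * hseq n)^2/2) • g2f γ i n - ((s * hseq n)^3/6) • g3f γ i n

def Af (n : ℕ) : ℝ × ℝ := γ (((i : ℝ) + (-2))/n) - γ ((i : ℝ)/n)
def Bf (n : ℕ) : ℝ × ℝ := γ (((i : ℝ) + 1)/n) - γ ((i : ℝ)/n)
def Cf (n : ℕ) : ℝ × ℝ := γ (((i : ℝ) + (-1))/n) - γ ((i : ℝ)/n)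
def Df (n : ℕ) : ℝ × ℝ := γ (((i : ℝ) + 2)/n) - γ ((i : ℝ)/n)

def dABf (n : ℕ) : ℝ := det2 (Af γ i n) (Bf γ i n)
def dCDf (n : ℕ) : ℝ := det2 (Cf γ i n) (Df γ i n)
def Δf (n : ℕ) : ℝ := det2 (Bf γ i n - Af γ i n) (Df γ i n - Cf γ i n)
def Nf (n : ℕ) : ℝ × ℝ :=
  dCDf γ i n • (Bf γ i n - Af γ i n) - dABf γ i n • (Df γ i n - Cf γ i n)

def eABf (n : ℕ) : ℝ := dABf γ i n - (-3*(hseq n)^3*Kf γ i n + (hseq n)^4*Lf γ i n)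
def eCDf (n : ℕ) : ℝ := dCDf γ i n - (-3*(hseq n)^3*Kf γ i n - (hseq n)^4*Lf γ i n)
def eDf (n : ℕ) : ℝ := Δf γ i n - 9*(hseq n)^3*Kf γ i n

def errf (n : ℕ) : ℝ × ℝ :=
  (-3*(hseq n)^3*Kf γ i n) • ((Rf γ i 1 n - Rf γ i (-2) n) - (Rf γ i 2 n - Rf γ i (-1) n))
    - (3*(hseq n)^7*Lf γ i n) • g3f γ i n
    - ((hseq n)^4*Lf γ i n) • ((Rf γ i 1 n - Rf γ i (-2) n) + (Rf γ i 2 n - Rf γ i (-1) n))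
    + eCDf γ i n • (Bf γ i n - Af γ i n) - eABf γ i n • (Df γ i n - Cf γ i n)

def Vpf (n : ℕ) : ℝ × ℝ := Kf γ i n • g2f γ i n - (2/3 * Lf γ i n) • g1f γ i n

def Φf (n : ℕ) : ℝ × ℝ := Kf γ i n • Nf γ i n - ((hseq n)^2 * Δf γ i n) • Vpf γ i n

/-! ### algebraic identities -/

lemma hABCD (n : ℕ) :
    Af γ i n = Pf γ i (-2) n + Rf γ i (-2) n ∧ Bf γ i n = Pf γ i 1 n + Rf γ i 1 n ∧
    Cf γ i n = Pf γ i (-1) n + Rf γ i (-1) n ∧ Df γ i n = Pf γ i 2 n + Rf γ i 2 n := by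
  refine ⟨?_, ?_, ?_, ?_⟩ <;> (simp only [Af, Bf, Cf, Df, Pf, Rf]; abel)

lemma I1 (n : ℕ) :
    eABf γ i n = (hseq n)^5 * Mdf γ i n + det2 (Pf γ i (-2) n) (Rf γ i 1 n)
      + det2 (Rf γ i (-2) n) (Pf γ i 1 n) + det2 (Rf γ i (-2) n) (Rf γ i 1 n) := by
  simp only [eABf, dABf, Af, Bf, Kf, Lf, Mdf, Pf, Rf, det2]
  simp only [Prod.fst_add, Prod.snd_add, Prod.fst_sub, Prod.snd_sub, Prod.smul_fst,
    Prod.smul_snd, smul_eq_mul]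
  ring

lemma I2 (n : ℕ) :
    eCDf γ i n = (hseq n)^5 * Mdf γ i n + det2 (Pf γ i (-1) n) (Rf γ i 2 n)
      + det2 (Rf γ i (-1) n) (Pf γ i 2 n) + det2 (Rf γ i (-1) n) (Rf γ i 2 n) := by
  simp only [eCDf, dCDf, Cf, Df, Kf, Lf, Mdf, Pf, Rf, det2]
  simp only [Prod.fst_add, Prod.snd_add, Prod.fst_sub, Prod.snd_sub, Prod.smul_fst,
    Prod.smul_snd, smul_eq_mul]
  ring

lemma I3 (n : ℕ) :
    eDf γ i n = -(9/2)*(hseq n)^5 * Mdf γ i n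
      + det2 (Pf γ i 1 n - Pf γ i (-2) n) (Rf γ i 2 n - Rf γ i (-1) n)
      + det2 (Rf γ i 1 n - Rf γ i (-2) n) (Pf γ i 2 n - Pf γ i (-1) n)
      + det2 (Rf γ i 1 n - Rf γ i (-2) n) (Rf γ i 2 n - Rf γ i (-1) n) := by
  simp only [eDf, Δf, Af, Bf, Cf, Df, Kf, Mdf, Pf, Rf, det2]
  simp only [Prod.fst_add, Prod.snd_add, Prod.fst_sub, Prod.snd_sub, Prod.smul_fst,
    Prod.smul_snd, smul_eq_mul]
  ring

lemma I5 (n : ℕ) :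
    Φf γ i n = Kf γ i n • errf γ i n - ((hseq n)^2 * eDf γ i n) • Vpf γ i n := by
  simp only [Φf, errf, eDf, eABf, eCDf, Vpf, Nf, dABf, dCDf, Δf, Af, Bf, Cf, Df, Kf, Lf, Mdf, Pf, Rf, det2]
  apply Prod.ext <;>
    (simp only [Prod.fst_add, Prod.snd_add, Prod.fst_sub, Prod.snd_sub, Prod.smul_fst,
      Prod.smul_snd, smul_eq_mul]; ring)

/-! ### asymptotic estimates -/

lemma tendsto_hseq : Tendsto hseq atTop (nhds 0) := by
  have h := tendsto_one_div_atTop_nhds_zero_nat (𝕜 := ℝ)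
  simp only [one_div] at h
  exact h

lemma tendsto_tf : Tendsto (fun n : ℕ => (i : ℝ)/n) atTop (nhds 0) := by
  have := tendsto_one_div_atTop_nhds_zero_nat.const_mul (i : ℝ)
  simpa [div_eq_mul_inv, one_div] using this

lemma hpow_le {a b : ℕ} (h : b ≤ a) :
    (fun n => (hseq n)^a) =O[atTop] (fun n => (hseq n)^b) := by
  have he : (fun n => (hseq n)^a) = fun n => (hseq n)^(a-b) * (hseq n)^b :=
    funext fun n => by rw [← pow_add]; congr 1; omega
  rw [he]
  have h1 : Tendsto (fun n => (hseq n)^(a-b)) atTop (nhds (0^(a-b))) := tendsto_hseq.pow _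
  simpa using (h1.isBigO_one ℝ).mul (isBigO_refl (fun n => (hseq n)^b) atTop)

lemma term_isBigO {g : ℕ → ℝ × ℝ} (hg : g =O[atTop] fun _ => (1:ℝ)) {c d : ℕ → ℝ}
    (hc : c =O[atTop] d) : (fun n => c n • g n) =O[atTop] d := by
  simpa using hc.smul hg

variable {γ} in
lemma g_isBigO (hγ : ContDiff ℝ 4 γ) :
    (g1f γ i) =O[atTop] (fun _ => (1:ℝ)) ∧ (g2f γ i) =O[atTop] (fun _ => (1:ℝ)) ∧
      (g3f γ i) =O[atTop] (fun _ => (1:ℝ)) := by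
  have hc1 : Continuous (deriv γ) := hγ.continuous_deriv (by norm_num)
  have hc2 : Continuous (iteratedDeriv 2 γ) := hγ.continuous_iteratedDeriv 2 (by norm_num)
  have hc3 : Continuous (iteratedDeriv 3 γ) := hγ.continuous_iteratedDeriv 3 (by norm_num)
  exact ⟨(((hc1.tendsto 0).comp (tendsto_tf i)).isBigO_one ℝ),
    (((hc2.tendsto 0).comp (tendsto_tf i)).isBigO_one ℝ),
    (((hc3.tendsto 0).comp (tendsto_tf i)).isBigO_one ℝ)⟩

variable {γ} in
lemma KLMd_isBigO (hγ : ContDiff ℝ 4 γ) :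
    (Kf γ i) =O[atTop] (fun _ => (1:ℝ)) ∧ (Lf γ i) =O[atTop] (fun _ => (1:ℝ)) ∧
      (Mdf γ i) =O[atTop] (fun _ => (1:ℝ)) ∧ (Vpf γ i) =O[atTop] (fun _ => (1:ℝ)) := by
  obtain ⟨h1, h2, h3⟩ := g_isBigO i hγ
  refine ⟨by simpa [Kf] using det2_isBigO h1 h2, by simpa [Lf] using det2_isBigO h1 h3,
    by simpa [Mdf] using det2_isBigO h2 h3, ?_⟩
  have hK : (Kf γ i) =O[atTop] (fun _ => (1:ℝ)) := by simpa [Kf] using det2_isBigO h1 h2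
  have hL : (Lf γ i) =O[atTop] (fun _ => (1:ℝ)) := by simpa [Lf] using det2_isBigO h1 h3
  have t1 : (fun n => Kf γ i n • g2f γ i n) =O[atTop] (fun _ => (1:ℝ)) := by
    simpa using hK.smul h2
  have t2 : (fun n => (2/3 * Lf γ i n) • g1f γ i n) =O[atTop] (fun _ => (1:ℝ)) := by
    simpa using (hL.const_mul_left (2/3)).smul h1
  simpa [Vpf] using t1.sub t2

variable {γ} in
lemma Rf_isBigO (hγ : ContDiff ℝ 4 γ) (s : ℝ) :
    (Rf γ i s) =O[atTop] fun n => (hseq n)^4 := by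
  have hu : Tendsto (fun n : ℕ => s * hseq n) atTop (nhds 0) := by
    simpa using tendsto_hseq.const_mul s
  have key := taylorSeq hγ (tendsto_tf i) hu
  have heq : Rf γ i s = fun n : ℕ =>
      γ ((i:ℝ)/n + s * hseq n) - γ ((i:ℝ)/n) - (s * hseq n) • deriv γ ((i:ℝ)/n)
        - ((s * hseq n)^2/2) • iteratedDeriv 2 γ ((i:ℝ)/n)
        - ((s * hseq n)^3/6) • iteratedDeriv 3 γ ((i:ℝ)/n) := by
    funext n
    simp only [Rf, g1f, g2f, g3f]
    rw [show ((i:ℝ) + s)/(n:ℝ) = (i:ℝ)/n + s * hseq n by simp only [hseq]; ring]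
  rw [heq]
  refine key.trans ?_
  have he : (fun n : ℕ => (s * hseq n)^4) = fun n => s^4 * (hseq n)^4 :=
    funext fun n => by ring
  rw [he]
  exact (isBigO_refl _ _).const_mul_left _

variable {γ} in
lemma Pf_isBigO (hγ : ContDiff ℝ 4 γ) (s : ℝ) : (Pf γ i s) =O[atTop] hseq := by
  obtain ⟨h1, h2, h3⟩ := g_isBigO i hγ
  have hp2 : (fun n : ℕ => (hseq n)^2) =O[atTop] hseq :=
    (hpow_le (by norm_num : 1 ≤ 2)).congr_right (fun n => pow_one _)
  have hp3 : (fun n : ℕ => (hseq n)^3) =O[atTop] hseq :=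
    (hpow_le (by norm_num : 1 ≤ 3)).congr_right (fun n => pow_one _)
  have c1 : (fun n => s * hseq n) =O[atTop] hseq := (isBigO_refl _ _).const_mul_left s
  have c2 : (fun n => (s * hseq n)^2/2) =O[atTop] hseq := by
    have he : (fun n : ℕ => (s * hseq n)^2/2) = fun n => (s^2/2) * (hseq n)^2 :=
      funext fun n => by ring
    rw [he]; exact hp2.const_mul_left _
  have c3 : (fun n => (s * hseq n)^3/6) =O[atTop] hseq := by
    have he : (fun n : ℕ => (s * hseq n)^3/6) = fun n => (s^3/6) * (hseq n)^3 :=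
      funext fun n => by ring
    rw [he]; exact hp3.const_mul_left _
  exact ((term_isBigO h1 c1).add (term_isBigO h2 c2)).add (term_isBigO h3 c3)

variable {γ} in
lemma eAB_isBigO (hγ : ContDiff ℝ 4 γ) :
    (eABf γ i) =O[atTop] (fun n => (hseq n)^5) ∧ (eCDf γ i) =O[atTop] (fun n => (hseq n)^5) := by
  obtain ⟨hK, hL, hMd, hV⟩ := KLMd_isBigO i hγ
  have hPR : ∀ s s' : ℝ, (fun n => det2 (Pf γ i s n) (Rf γ i s' n)) =O[atTop]
      fun n => (hseq n)^5 := by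
    intro s s'
    have := det2_isBigO (Pf_isBigO i hγ s) (Rf_isBigO i hγ s')
    refine this.trans (IsBigO.of_bound 1 ?_)
    filter_upwards with n
    simp [pow_succ, abs_mul, mul_comm, mul_assoc, mul_left_comm]
  have hRP : ∀ s s' : ℝ, (fun n => det2 (Rf γ i s n) (Pf γ i s' n)) =O[atTop]
      fun n => (hseq n)^5 := by
    intro s s'
    have := det2_isBigO (Rf_isBigO i hγ s) (Pf_isBigO i hγ s')
    refine this.trans (IsBigO.of_bound 1 ?_)
    filter_upwards with n
    simp [pow_succ, abs_mul, mul_comm, mul_assoc, mul_left_comm]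
  have hRR : ∀ s s' : ℝ, (fun n => det2 (Rf γ i s n) (Rf γ i s' n)) =O[atTop]
      fun n => (hseq n)^5 := by
    intro s s'
    have h8 := det2_isBigO (Rf_isBigO i hγ s) (Rf_isBigO i hγ s')
    have he : (fun n : ℕ => (hseq n)^4 * (hseq n)^4) = fun n => (hseq n)^8 :=
      funext fun n => by ring
    rw [he] at h8
    exact h8.trans (hpow_le (by norm_num))
  have hMd5 : (fun n => (hseq n)^5 * Mdf γ i n) =O[atTop] fun n => (hseq n)^5 := by
    simpa using (isBigO_refl (fun n => (hseq n)^5) atTop).mul hMd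
  constructor
  · have he : eABf γ i = fun n => (hseq n)^5 * Mdf γ i n + det2 (Pf γ i (-2) n) (Rf γ i 1 n)
        + det2 (Rf γ i (-2) n) (Pf γ i 1 n) + det2 (Rf γ i (-2) n) (Rf γ i 1 n) :=
      funext (I1 γ i)
    rw [he]
    exact ((hMd5.add (hPR _ _)).add (hRP _ _)).add (hRR _ _)
  · have he : eCDf γ i = fun n => (hseq n)^5 * Mdf γ i n + det2 (Pf γ i (-1) n) (Rf γ i 2 n)
        + det2 (Rf γ i (-1) n) (Pf γ i 2 n) + det2 (Rf γ i (-1) n) (Rf γ i 2 n) :=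
      funext (I2 γ i)
    rw [he]
    exact ((hMd5.add (hPR _ _)).add (hRP _ _)).add (hRR _ _)

variable {γ} in
lemma eD_isBigO (hγ : ContDiff ℝ 4 γ) : (eDf γ i) =O[atTop] (fun n => (hseq n)^4) := by
  obtain ⟨hK, hL, hMd, hV⟩ := KLMd_isBigO i hγ
  have hPd : ∀ s s' : ℝ, (fun n => Pf γ i s n - Pf γ i s' n) =O[atTop] hseq :=
    fun s s' => (Pf_isBigO i hγ s).sub (Pf_isBigO i hγ s')
  have hRd : ∀ s s' : ℝ, (fun n => Rf γ i s n - Rf γ i s' n) =O[atTop]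
      (fun n => (hseq n)^4) := fun s s' => (Rf_isBigO i hγ s).sub (Rf_isBigO i hγ s')
  have he : eDf γ i = fun n => -(9/2)*(hseq n)^5 * Mdf γ i n
      + det2 (Pf γ i 1 n - Pf γ i (-2) n) (Rf γ i 2 n - Rf γ i (-1) n)
      + det2 (Rf γ i 1 n - Rf γ i (-2) n) (Pf γ i 2 n - Pf γ i (-1) n)
      + det2 (Rf γ i 1 n - Rf γ i (-2) n) (Rf γ i 2 n - Rf γ i (-1) n) := funext (I3 γ i)
  rw [he]
  have t1 : (fun n => -(9/2)*(hseq n)^5 * Mdf γ i n) =O[atTop] fun n => (hseq n)^4 := by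
    have : (fun n => -(9/2)*(hseq n)^5 * Mdf γ i n) =O[atTop] fun n => (hseq n)^5 := by
      simpa [mul_assoc] using (((isBigO_refl (fun n => (hseq n)^5) atTop).const_mul_left
        (-(9/2))).mul hMd)
    exact this.trans (hpow_le (by norm_num))
  have t2 : (fun n => det2 (Pf γ i 1 n - Pf γ i (-2) n) (Rf γ i 2 n - Rf γ i (-1) n))
      =O[atTop] fun n => (hseq n)^4 := by
    have h0 := det2_isBigO (hPd 1 (-2)) (hRd 2 (-1))
    have he2 : (fun n : ℕ => hseq n * (hseq n)^4) = fun n => (hseq n)^5 :=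
      funext fun n => by ring
    rw [he2] at h0
    exact h0.trans (hpow_le (by norm_num))
  have t3 : (fun n => det2 (Rf γ i 1 n - Rf γ i (-2) n) (Pf γ i 2 n - Pf γ i (-1) n))
      =O[atTop] fun n => (hseq n)^4 := by
    have h0 := det2_isBigO (hRd 1 (-2)) (hPd 2 (-1))
    have he2 : (fun n : ℕ => (hseq n)^4 * hseq n) = fun n => (hseq n)^5 :=
      funext fun n => by ring
    rw [he2] at h0
    exact h0.trans (hpow_le (by norm_num))
  have t4 : (fun n => det2 (Rf γ i 1 n - Rf γ i (-2) n) (Rf γ i 2 n - Rf γ i (-1) n))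
      =O[atTop] fun n => (hseq n)^4 := by
    have h0 := det2_isBigO (hRd 1 (-2)) (hRd 2 (-1))
    have he2 : (fun n : ℕ => (hseq n)^4 * (hseq n)^4) = fun n => (hseq n)^8 :=
      funext fun n => by ring
    rw [he2] at h0
    exact h0.trans (hpow_le (by norm_num))
  exact ((t1.add t2).add t3).add t4

variable {γ} in
lemma Φ_isBigO (hγ : ContDiff ℝ 4 γ) : (Φf γ i) =O[atTop] (fun n => (hseq n)^6) := by
  obtain ⟨hK, hL, hMd, hV⟩ := KLMd_isBigO i hγ
  obtain ⟨hg1, hg2, hg3⟩ := g_isBigO i hγ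
  obtain ⟨heAB, heCD⟩ := eAB_isBigO i hγ
  have hRd : ∀ s s' : ℝ, (fun n => Rf γ i s n - Rf γ i s' n) =O[atTop]
      (fun n => (hseq n)^4) := fun s s' => (Rf_isBigO i hγ s).sub (Rf_isBigO i hγ s')
  have hBA : (fun n => Bf γ i n - Af γ i n) =O[atTop] hseq := by
    have he : (fun n => Bf γ i n - Af γ i n)
        = fun n => (Pf γ i 1 n - Pf γ i (-2) n) + (Rf γ i 1 n - Rf γ i (-2) n) := by
      funext n
      rw [(hABCD γ i n).1, (hABCD γ i n).2.1]; abel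
    rw [he]
    refine ((Pf_isBigO i hγ 1).sub (Pf_isBigO i hγ (-2))).add ((hRd 1 (-2)).trans ?_)
    exact (hpow_le (by norm_num : 1 ≤ 4)).congr_right (fun n => pow_one _)
  have hDC : (fun n => Df γ i n - Cf γ i n) =O[atTop] hseq := by
    have he : (fun n => Df γ i n - Cf γ i n)
        = fun n => (Pf γ i 2 n - Pf γ i (-1) n) + (Rf γ i 2 n - Rf γ i (-1) n) := by
      funext n
      rw [(hABCD γ i n).2.2.1, (hABCD γ i n).2.2.2]; abel
    rw [he]
    refine ((Pf_isBigO i hγ 2).sub (Pf_isBigO i hγ (-1))).add ((hRd 2 (-1)).trans ?_)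
    exact (hpow_le (by norm_num : 1 ≤ 4)).congr_right (fun n => pow_one _)
  -- error term is O(h^6)
  have herr : (errf γ i) =O[atTop] (fun n => (hseq n)^6) := by
    have u1 : (fun n => (-3*(hseq n)^3*Kf γ i n) •
        ((Rf γ i 1 n - Rf γ i (-2) n) - (Rf γ i 2 n - Rf γ i (-1) n))) =O[atTop]
        fun n => (hseq n)^6 := by
      have hsc : (fun n => -3*(hseq n)^3*Kf γ i n) =O[atTop] fun n => (hseq n)^3 := by
        simpa [mul_assoc] using (((isBigO_refl (fun n => (hseq n)^3) atTop).const_mul_left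
          (-3)).mul hK)
      have := hsc.smul ((hRd 1 (-2)).sub (hRd 2 (-1)))
      refine this.trans (by
        have he2 : (fun n : ℕ => (hseq n)^3 • (hseq n)^4) = fun n => (hseq n)^7 :=
          funext fun n => by simp [smul_eq_mul]; ring
        rw [he2]; exact hpow_le (by norm_num))
    have u2 : (fun n => (3*(hseq n)^7*Lf γ i n) • g3f γ i n) =O[atTop]
        fun n => (hseq n)^6 := by
      have hsc : (fun n => 3*(hseq n)^7*Lf γ i n) =O[atTop] fun n => (hseq n)^7 := by
        simpa [mul_assoc] using (((isBigO_refl (fun n => (hseq n)^7) atTop).const_mul_left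
          3).mul hL)
      refine (term_isBigO hg3 hsc).trans (hpow_le (by norm_num))
    have u3 : (fun n => ((hseq n)^4*Lf γ i n) •
        ((Rf γ i 1 n - Rf γ i (-2) n) + (Rf γ i 2 n - Rf γ i (-1) n))) =O[atTop]
        fun n => (hseq n)^6 := by
      have hsc : (fun n => (hseq n)^4*Lf γ i n) =O[atTop] fun n => (hseq n)^4 := by
        simpa using ((isBigO_refl (fun n => (hseq n)^4) atTop).mul hL)
      have := hsc.smul ((hRd 1 (-2)).add (hRd 2 (-1)))
      refine this.trans (by
        have he2 : (fun n : ℕ => (hseq n)^4 • (hseq n)^4) = fun n => (hseq n)^8 :=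
          funext fun n => by simp [smul_eq_mul]; ring
        rw [he2]; exact hpow_le (by norm_num))
    have u4 : (fun n => eCDf γ i n • (Bf γ i n - Af γ i n)) =O[atTop]
        fun n => (hseq n)^6 := by
      have := heCD.smul hBA
      refine this.trans (by
        have he2 : (fun n : ℕ => (hseq n)^5 • hseq n) = fun n => (hseq n)^6 :=
          funext fun n => by simp [smul_eq_mul]; ring
        rw [he2]; exact isBigO_refl _ _)
    have u5 : (fun n => eABf γ i n • (Df γ i n - Cf γ i n)) =O[atTop]
        fun n => (hseq n)^6 := by
      have := heAB.smul hDC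
      refine this.trans (by
        have he2 : (fun n : ℕ => (hseq n)^5 • hseq n) = fun n => (hseq n)^6 :=
          funext fun n => by simp [smul_eq_mul]; ring
        rw [he2]; exact isBigO_refl _ _)
    exact (((u1.sub u2).sub u3).add u4).sub u5
  have he : Φf γ i = fun n => Kf γ i n • errf γ i n - ((hseq n)^2 * eDf γ i n) • Vpf γ i n :=
    funext (I5 γ i)
  rw [he]
  have v1 : (fun n => Kf γ i n • errf γ i n) =O[atTop] fun n => (hseq n)^6 := by
    simpa using hK.smul herr
  have v2 : (fun n => ((hseq n)^2 * eDf γ i n) • Vpf γ i n) =O[atTop]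
      fun n => (hseq n)^6 := by
    have hsc : (fun n => (hseq n)^2 * eDf γ i n) =O[atTop] fun n => (hseq n)^6 := by
      have h0 := (isBigO_refl (fun n => (hseq n)^2) atTop).mul (eD_isBigO i hγ)
      have he2 : (fun n : ℕ => (hseq n)^2 * (hseq n)^4) = fun n => (hseq n)^6 :=
        funext fun n => by ring
      rw [he2] at h0
      exact h0
    simpa using hsc.smul hV
  exact v1.sub v2

variable {γ} in
lemma cramer (p : ℕ → ℝ × ℝ)
    (hp1 : ∀ n : ℕ, det2 (p n - γ (((i:ℝ) - 2) / n)) (γ (((i:ℝ) + 1) / n) - γ (((i:ℝ) - 2) / n)) = 0)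
    (hp2 : ∀ n : ℕ, det2 (p n - γ (((i:ℝ) - 1) / n)) (γ (((i:ℝ) + 2) / n) - γ (((i:ℝ) - 1) / n)) = 0)
    (n : ℕ) : Δf γ i n • (p n - γ ((i:ℝ)/n)) = Nf γ i n := by
  have e1 := hp1 n
  have e2 := hp2 n
  rw [show ((i:ℝ) - 2)/(n:ℝ) = ((i:ℝ) + (-2))/n by ring] at e1
  rw [show ((i:ℝ) - 1)/(n:ℝ) = ((i:ℝ) + (-1))/n by ring] at e2
  simp only [det2, Prod.fst_sub, Prod.snd_sub] at e1 e2
  apply Prod.ext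
  · simp only [Δf, Nf, dABf, dCDf, Af, Bf, Cf, Df, det2, Prod.smul_fst, Prod.fst_sub,
      Prod.snd_sub, smul_eq_mul, Prod.fst_add, Prod.snd_add]
    linear_combination (-((γ (((i:ℝ)+2)/n)).1 - (γ (((i:ℝ)+(-1))/n)).1)) * e1
      + ((γ (((i:ℝ)+1)/n)).1 - (γ (((i:ℝ)+(-2))/n)).1) * e2
  · simp only [Δf, Nf, dABf, dCDf, Af, Bf, Cf, Df, det2, Prod.smul_snd, Prod.fst_sub,
      Prod.snd_sub, smul_eq_mul, Prod.fst_add, Prod.snd_add]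
    linear_combination (-((γ (((i:ℝ)+2)/n)).2 - (γ (((i:ℝ)+(-1))/n)).2)) * e1
      + ((γ (((i:ℝ)+1)/n)).2 - (γ (((i:ℝ)+(-2))/n)).2) * e2

theorem stmt17 (γ : ℝ → ℝ × ℝ) (hγ : ContDiff ℝ 4 γ)
    (hnd : ∀ t, det2 (deriv γ t) (iteratedDeriv 2 γ t) ≠ 0)
    (i : ℤ) (p : ℕ → ℝ × ℝ)
    (hp1 : ∀ n : ℕ, det2 (p n - γ (((i:ℝ) - 2) / n)) (γ (((i:ℝ) + 1) / n) - γ (((i:ℝ) - 2) / n)) = 0)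
    (hp2 : ∀ n : ℕ, det2 (p n - γ (((i:ℝ) - 1) / n)) (γ (((i:ℝ) + 2) / n) - γ (((i:ℝ) - 1) / n)) = 0) :
    (fun n : ℕ =>
        (n:ℝ)^2 • (p n - γ ((i:ℝ) / n))
          - (iteratedDeriv 2 γ ((i:ℝ)/n) - (2/3 * Wc γ ((i:ℝ)/n)) • deriv γ ((i:ℝ)/n)))
      =O[atTop] fun n : ℕ => (1:ℝ)/(n:ℝ) := by
  -- limit of K
  set K₀ : ℝ := det2 (deriv γ 0) (iteratedDeriv 2 γ 0) with hK₀def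
  have hK₀ : K₀ ≠ 0 := hnd 0
  have hk0pos : 0 < |K₀| := abs_pos.mpr hK₀
  have hKlim : Tendsto (Kf γ i) atTop (nhds K₀) := by
    have hc1 : Continuous (deriv γ) := hγ.continuous_deriv (by norm_num)
    have hc2 : Continuous (iteratedDeriv 2 γ) := hγ.continuous_iteratedDeriv 2 (by norm_num)
    have hcK : Continuous (fun x : ℝ => det2 (deriv γ x) (iteratedDeriv 2 γ x)) := by
      simp only [det2]
      exact (hc1.fst.mul hc2.snd).sub (hc1.snd.mul hc2.fst)
    exact (hcK.tendsto 0).comp (tendsto_tf i)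
  -- eventual bounds
  have hKev : ∀ᶠ n in atTop, |K₀|/2 < |Kf γ i n| :=
    ((continuous_abs.tendsto K₀).comp hKlim).eventually_const_lt (by linarith)
  obtain ⟨CΦ, hCΦ⟩ := isBigO_iff.mp (Φ_isBigO i hγ)
  obtain ⟨CD, hCD⟩ := isBigO_iff.mp (eD_isBigO i hγ)
  have hsmall : ∀ᶠ n in atTop, CD * hseq n < 7/2 * |K₀| := by
    have hl : Tendsto (fun n => CD * hseq n) atTop (nhds 0) := by
      simpa using tendsto_hseq.const_mul CD
    exact hl.eventually_lt_const (by linarith)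
  rw [isBigO_iff]
  refine ⟨2 * CΦ / K₀^2, ?_⟩
  filter_upwards [eventually_ge_atTop 1, hKev, hCΦ, hCD, hsmall] with n hn hKn hΦn hDn hsm
  have hn0 : (n:ℝ) ≠ 0 := Nat.cast_ne_zero.mpr (by omega)
  have hpos : 0 < hseq n := by
    simp only [hseq]
    exact inv_pos.mpr (by exact_mod_cast Nat.pos_of_ne_zero (by omega))
  have hK6 : ‖(hseq n)^6‖ = (hseq n)^6 := by
    rw [Real.norm_eq_abs, abs_of_pos (by positivity)]
  have hK4 : ‖(hseq n)^4‖ = (hseq n)^4 := by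
    rw [Real.norm_eq_abs, abs_of_pos (by positivity)]
  rw [hK6] at hΦn
  rw [hK4] at hDn
  have hCΦ0 : 0 ≤ CΦ := by nlinarith [norm_nonneg (Φf γ i n), pow_pos hpos 6]
  -- lower bound for |Δ|
  have hΔeq : Δf γ i n = 9*(hseq n)^3*Kf γ i n + eDf γ i n := by
    simp only [eDf]; ring
  have hΔabs : |K₀| * (hseq n)^3 ≤ |Δf γ i n| := by
    have habs1 : |9*(hseq n)^3*Kf γ i n| - |eDf γ i n| ≤ |Δf γ i n| := by
      rw [hΔeq]
      have := abs_add_le (9*(hseq n)^3*Kf γ i n + eDf γ i n) (-(eDf γ i n))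
      simp only [add_neg_cancel_right, abs_neg] at this
      linarith
    have habs2 : |9*(hseq n)^3*Kf γ i n| = 9*(hseq n)^3*|Kf γ i n| := by
      rw [abs_mul, abs_of_pos (by positivity : (0:ℝ) < 9*(hseq n)^3)]
    rw [Real.norm_eq_abs] at hDn
    have f1 : 9*(hseq n)^3*(|K₀|/2) ≤ 9*(hseq n)^3*|Kf γ i n| := by
      have := le_of_lt hKn
      nlinarith [pow_pos hpos 3]
    have f3 : CD*(hseq n)^4 ≤ (7/2*|K₀|)*(hseq n)^3 := by
      have h3 : (0:ℝ) < (hseq n)^3 := pow_pos hpos 3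
      nlinarith
    linarith
  have hΔne : Δf γ i n ≠ 0 := by
    intro hzero
    rw [hzero, abs_zero] at hΔabs
    nlinarith [pow_pos hpos 3]
  have hKne : Kf γ i n ≠ 0 := by
    intro hzero
    rw [hzero, abs_zero] at hKn
    linarith
  have hc : (hseq n)^2 * Δf γ i n * Kf γ i n ≠ 0 := by
    apply mul_ne_zero (mul_ne_zero (by positivity) hΔne) hKne
  have hq := cramer i p hp1 hp2 n
  -- Vpf = K • V
  have hndn : det2 (deriv γ ((i:ℝ)/n)) (iteratedDeriv 2 γ ((i:ℝ)/n)) ≠ 0 := hnd _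
  have hVp : Vpf γ i n = Kf γ i n •
      (iteratedDeriv 2 γ ((i:ℝ)/n) - (2/3 * Wc γ ((i:ℝ)/n)) • deriv γ ((i:ℝ)/n)) := by
    simp only [Vpf, Wc, Kf, Lf, g1f, g2f, g3f]
    apply Prod.ext <;>
      (simp only [Prod.smul_fst, Prod.smul_snd, Prod.fst_sub, Prod.snd_sub, smul_eq_mul]
       field_simp)
  -- the key identity
  have hΦeq : Φf γ i n = (Kf γ i n * Δf γ i n) • (p n - γ ((i:ℝ)/n))
      - ((hseq n)^2 * Δf γ i n * Kf γ i n) •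
        (iteratedDeriv 2 γ ((i:ℝ)/n) - (2/3 * Wc γ ((i:ℝ)/n)) • deriv γ ((i:ℝ)/n)) := by
    simp only [Φf]
    rw [← hq, hVp, smul_smul, smul_smul]
  have hgoal_eq : (n:ℝ)^2 • (p n - γ ((i:ℝ)/n))
      - (iteratedDeriv 2 γ ((i:ℝ)/n) - (2/3 * Wc γ ((i:ℝ)/n)) • deriv γ ((i:ℝ)/n))
      = ((hseq n)^2 * Δf γ i n * Kf γ i n)⁻¹ • Φf γ i n := by
    have s1 : ((hseq n)^2 * Δf γ i n * Kf γ i n)⁻¹ * (Kf γ i n * Δf γ i n) = (n:ℝ)^2 := by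
      simp only [hseq]
      field_simp
    have s2 : ((hseq n)^2 * Δf γ i n * Kf γ i n)⁻¹ * ((hseq n)^2 * Δf γ i n * Kf γ i n) = 1 :=
      inv_mul_cancel₀ hc
    have expand : ((hseq n)^2 * Δf γ i n * Kf γ i n)⁻¹ • Φf γ i n
        = (((hseq n)^2 * Δf γ i n * Kf γ i n)⁻¹ * (Kf γ i n * Δf γ i n)) • (p n - γ ((i:ℝ)/n))
          - (((hseq n)^2 * Δf γ i n * Kf γ i n)⁻¹ * ((hseq n)^2 * Δf γ i n * Kf γ i n)) •
            (iteratedDeriv 2 γ ((i:ℝ)/n) - (2/3 * Wc γ ((i:ℝ)/n)) • deriv γ ((i:ℝ)/n)) := by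
      rw [hΦeq]
      module
    rw [expand, s1, s2, one_smul]
  rw [hgoal_eq, norm_smul]
  -- lower bound for |c|
  have hcabs : |K₀|^2/2 * (hseq n)^5 ≤ |(hseq n)^2 * Δf γ i n * Kf γ i n| := by
    rw [abs_mul, abs_mul, abs_pow, abs_of_pos hpos]
    have c1 : (hseq n)^2 * (|K₀| * (hseq n)^3) ≤ (hseq n)^2 * |Δf γ i n| :=
      mul_le_mul_of_nonneg_left hΔabs (le_of_lt (pow_pos hpos 2))
    have c2 : ((hseq n)^2 * (|K₀| * (hseq n)^3)) * (|K₀|/2) ≤ ((hseq n)^2 * |Δf γ i n|) * |Kf γ i n| :=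
      mul_le_mul c1 (le_of_lt hKn) (by positivity) (by positivity)
    nlinarith [c2]
  have e1 : ‖((hseq n)^2 * Δf γ i n * Kf γ i n)⁻¹‖ ≤ (|K₀|^2/2 * (hseq n)^5)⁻¹ := by
    rw [Real.norm_eq_abs, abs_inv]
    exact inv_anti₀ (by positivity) hcabs
  calc ‖((hseq n)^2 * Δf γ i n * Kf γ i n)⁻¹‖ * ‖Φf γ i n‖
      ≤ (|K₀|^2/2 * (hseq n)^5)⁻¹ * (CΦ * (hseq n)^6) :=
        mul_le_mul e1 hΦn (norm_nonneg _) (by positivity)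
    _ = 2 * CΦ / K₀^2 * (hseq n) := by
        rw [← sq_abs K₀]
        have : |K₀| ≠ 0 := ne_of_gt hk0pos
        field_simp
    _ = 2 * CΦ / K₀^2 * ‖1/(n:ℝ)‖ := by
        rw [Real.norm_eq_abs, one_div, abs_of_pos (by simp only [hseq] at hpos; exact hpos)]
        simp only [hseq]
end
end

section
/- For vⱼ ∈ ℝ² in general position with pentagram image uⱼ = Cⱼv_{j−1} + Dⱼv_{j+1} = Aⱼvⱼ + Bⱼv_{j+2}, the twice-iterated pentagram map satisfies the exact identity T²(v_{i−1}) = vᵢ + T(D_{i−1})·Bᵢ·(v_{i+2} − vᵢ) + T(C_{i−1})·A_{i−2}·(v_{i−2} − vᵢ), where T(C_{i−1}) and T(D_{i−1}) are the C- and D-ratios computed from the image polygon U = T(V). -/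
noncomputable section

lemma ABsum (v : ℤ → ℝ × ℝ) (j : ℤ)
    (h : det2 (v (j-1) - v (j+1)) (v j - v (j+2)) ≠ 0) :
    Acoef v j + Bcoef v j = 1 := by
  unfold Acoef Bcoef
  rw [← add_div, div_eq_one_iff_eq h]
  simp only [det2, Prod.fst_sub, Prod.snd_sub]
  ring

lemma CDsum (v : ℤ → ℝ × ℝ) (j : ℤ)
    (h : det2 (v (j-1) - v (j+1)) (v j - v (j+2)) ≠ 0) :
    Ccoef v j + Dcoef v j = 1 := by
  unfold Ccoef Dcoef
  rw [← add_div, div_eq_one_iff_eq h]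
  simp only [det2, Prod.fst_sub, Prod.snd_sub]
  ring

theorem stmt19 (v : ℤ → ℝ × ℝ) (i : ℤ)
    (hden : ∀ j, det2 (v (j-1) - v (j+1)) (v j - v (j+2)) ≠ 0)
    (hdenU : ∀ j, det2 (pent v (j-1) - pent v (j+1)) (pent v j - pent v (j+2)) ≠ 0)
    (hu : ∀ j, pent v j = Ccoef v j • v (j-1) + Dcoef v j • v (j+1))
    (huU : ∀ j, pent (pent v) j
      = Ccoef (pent v) j • pent v (j-1) + Dcoef (pent v) j • pent v (j+1)) :
    pent (pent v) (i-1)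
      = v i + (Dcoef (pent v) (i-1) * Bcoef v i) • (v (i+2) - v i)
          + (Ccoef (pent v) (i-1) * Acoef v (i-2)) • (v (i-2) - v i) := by
  have e1 : i-1-1 = i-2 := by ring
  have e2 : i-1+1 = i := by ring
  have e3 : i-2+2 = i := by ring
  have hAB1 := ABsum v (i-2) (hden (i-2))
  have hAB2 := ABsum v i (hden i)
  have hCD := CDsum (pent v) (i-1) (hdenU (i-1))
  rw [huU (i-1), e1, e2]
  rw [show pent v (i-2) = Acoef v (i-2) • v (i-2) + Bcoef v (i-2) • v i by
        rw [pent, e3],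
      show pent v i = Acoef v i • v i + Bcoef v i • v (i+2) from rfl]
  set C := Ccoef (pent v) (i-1) with hC
  set D := Dcoef (pent v) (i-1) with hD
  set A1 := Acoef v (i-2) with hA1
  set B1 := Bcoef v (i-2) with hB1
  set A2 := Acoef v i with hA2
  set B2 := Bcoef v i with hB2
  set x := v (i-2) with hx
  set y := v i with hy
  set z := v (i+2) with hz
  clear_value C D A1 B1 A2 B2 x y z
  match_scalars
  · ring
  · linear_combination C * hAB1 + D * hAB2 + hCD
  · ring
end
end
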